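/- arXiv:2005.09893 — 3 statements merged into one kernel-verified Lean document; each statement's English description precedes it below -/
import Mathlib

section
/- Let A₁, A₂, A₃ be finite subsets of ℝ with |A₁| ≤ |A₂| ≤ |A₃|. Then there exist absolute constants C > 0 and c ≥ 0 such that T°(A₁,A₂,A₃) ≤ C·|A₁|·|A₂|^{5/3}·|A₃|^{4/3}·(log(2+|A₃|))^c. -/
open Finset

/-- `To A₁ A₂ A₃` counts triples `(u₁, u₂, u₃)` of pairwise distinct, collinear points
in the plane with `uᵢ ∈ Aᵢ × Aᵢ`. -/
noncomputable def To (A₁ A₂ A₃ : Finset ℝ) : ℕ :=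
  Set.ncard {p : (ℝ × ℝ) × (ℝ × ℝ) × (ℝ × ℝ) |
    p.1 ∈ (A₁ : Set ℝ) ×ˢ (A₁ : Set ℝ) ∧
    p.2.1 ∈ (A₂ : Set ℝ) ×ˢ (A₂ : Set ℝ) ∧
    p.2.2 ∈ (A₃ : Set ℝ) ×ˢ (A₃ : Set ℝ) ∧
    p.1 ≠ p.2.1 ∧ p.1 ≠ p.2.2 ∧ p.2.1 ≠ p.2.2 ∧
    Collinear ℝ {p.1, p.2.1, p.2.2}}

namespace CT

noncomputable section

/-- cross product of two plane vectors -/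
def cross (p q : ℝ × ℝ) : ℝ := p.1 * q.2 - p.2 * q.1

lemma cross_self (p : ℝ × ℝ) : cross p p = 0 := by simp [cross]; ring

lemma cross_smul_right (p : ℝ × ℝ) (r : ℝ) (q : ℝ × ℝ) :
    cross p (r • q) = r * cross p q := by
  simp [cross]; ring

lemma cross_smul_left (r : ℝ) (p q : ℝ × ℝ) :
    cross (r • p) q = r * cross p q := by
  simp [cross]; ring

lemma cross_sub_right (p q q' : ℝ × ℝ) :
    cross p (q - q') = cross p q - cross p q' := by
  simp [cross]; ring

/-- three points are collinear, as an algebraic condition -/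
def col3 (u v w : ℝ × ℝ) : Prop := cross (v - u) (w - u) = 0

instance (u v w : ℝ × ℝ) : Decidable (col3 u v w) := by unfold col3; infer_instance

lemma col3_left (u v : ℝ × ℝ) : col3 u v u := by simp [col3, cross]

lemma col3_right (u v : ℝ × ℝ) : col3 u v v := by simp [col3, cross_self]

lemma col3_of_smul {u v w : ℝ × ℝ} {r : ℝ} (h : w - u = r • (v - u)) : col3 u v w := by
  unfold col3
  rw [h, cross_smul_right, cross_self, mul_zero]

lemma exists_smul_of_col3 {u v w : ℝ × ℝ} (huv : u ≠ v) (h : col3 u v w) :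
    ∃ r : ℝ, w - u = r • (v - u) := by
  have hd : v - u ≠ 0 := sub_ne_zero.2 (Ne.symm huv)
  have h' : (v.1 - u.1) * (w.2 - u.2) - (v.2 - u.2) * (w.1 - u.1) = 0 := h
  by_cases h1 : v.1 - u.1 ≠ 0
  · refine ⟨(w.1 - u.1) / (v.1 - u.1), ?_⟩
    have e1 : w.1 - u.1 = (w.1 - u.1) / (v.1 - u.1) * (v.1 - u.1) := by field_simp
    have e2 : w.2 - u.2 = (w.1 - u.1) / (v.1 - u.1) * (v.2 - u.2) := by
      field_simp
      nlinarith [h']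
    exact Prod.ext e1 e2
  · push_neg at h1
    have h2 : v.2 - u.2 ≠ 0 := by
      intro h2
      exact hd (Prod.ext (by simpa using h1) (by simpa using h2))
    refine ⟨(w.2 - u.2) / (v.2 - u.2), ?_⟩
    have hw1 : w.1 - u.1 = 0 := by
      have h3 : (v.2 - u.2) * (w.1 - u.1) = 0 := by
        linear_combination (w.2 - u.2) * h1 - h'
      rcases mul_eq_zero.1 h3 with h4 | h4
      · exact absurd h4 h2
      · exact h4
    have e1 : w.1 - u.1 = (w.2 - u.2) / (v.2 - u.2) * (v.1 - u.1) := by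
      rw [hw1, h1, mul_zero]
    have e2 : w.2 - u.2 = (w.2 - u.2) / (v.2 - u.2) * (v.2 - u.2) := by field_simp
    exact Prod.ext e1 e2

lemma col3_iff_collinear (u v w : ℝ × ℝ) :
    col3 u v w ↔ Collinear ℝ ({u, v, w} : Set (ℝ × ℝ)) := by
  constructor
  · intro h
    by_cases huv : u = v
    · subst huv
      have : ({u, u, w} : Set (ℝ × ℝ)) = {u, w} := by simp
      rw [this]
      exact collinear_pair ℝ u w
    · obtain ⟨r, hr⟩ := exists_smul_of_col3 huv h
      rw [collinear_iff_of_mem (Set.mem_insert u {v, w})]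
      refine ⟨v - u, ?_⟩
      intro p hp
      rcases hp with hp | hp | hp
      · exact ⟨0, by simp [hp]⟩
      · refine ⟨1, ?_⟩
        subst hp
        rw [one_smul, vadd_eq_add]
        abel
      · simp only [Set.mem_singleton_iff] at hp
        subst hp
        refine ⟨r, ?_⟩
        rw [vadd_eq_add, ← hr]
        abel
  · intro h
    rw [collinear_iff_of_mem (Set.mem_insert u {v, w})] at h
    obtain ⟨dir, hdir⟩ := h
    obtain ⟨rv, hv⟩ := hdir v (by simp)
    obtain ⟨rw', hw⟩ := hdir w (by simp)
    have hv' : v - u = rv • dir := by rw [hv]; simp [vadd_eq_add]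
    have hw' : w - u = rw' • dir := by rw [hw]; simp [vadd_eq_add]
    unfold col3
    rw [hv', hw', cross_smul_left, cross_smul_right, cross_self]
    ring

/-! ### Lines through a finite universe -/

variable (U : Finset (ℝ × ℝ))

/-- the set of points of `U` collinear with `u` and `v` -/
def lineF (u v : ℝ × ℝ) : Finset (ℝ × ℝ) := U.filter (fun w => col3 u v w)

def lines : Finset (Finset (ℝ × ℝ)) :=
  ((U ×ˢ U).filter (fun z => z.1 ≠ z.2)).image (fun z => lineF U z.1 z.2)

variable {U}

lemma mem_lineF {u v w : ℝ × ℝ} : w ∈ lineF U u v ↔ w ∈ U ∧ col3 u v w := Finset.mem_filter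

lemma left_mem_lineF {u v : ℝ × ℝ} (hu : u ∈ U) : u ∈ lineF U u v :=
  mem_lineF.2 ⟨hu, col3_left u v⟩

lemma right_mem_lineF {u v : ℝ × ℝ} (hv : v ∈ U) : v ∈ lineF U u v :=
  mem_lineF.2 ⟨hv, col3_right u v⟩

/-- the key rewriting lemma: two distinct points on a line span the same line -/
lemma col3_congr {u v u' v' : ℝ × ℝ} (huv : u ≠ v) (h1 : col3 u v u') (h2 : col3 u v v')
    (hne : u' ≠ v') (w : ℝ × ℝ) : col3 u' v' w ↔ col3 u v w := by
  obtain ⟨α, hα⟩ := exists_smul_of_col3 huv h1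
  obtain ⟨β, hβ⟩ := exists_smul_of_col3 huv h2
  have hαβ : β - α ≠ 0 := by
    intro h
    apply hne
    have : α = β := by linarith [sub_eq_zero.1 h]
    have e : u' - v' = 0 := by
      have : u' - v' = (u' - u) - (v' - u) := by abel
      rw [this, hα, hβ, ‹α = β›, sub_self]
    have := sub_eq_zero.1 e
    exact this
  have key : cross (v' - u') (w - u') = (β - α) * cross (v - u) (w - u) := by
    have hvu' : v' - u' = (β - α) • (v - u) := by
      have : v' - u' = (v' - u) - (u' - u) := by abel
      rw [this, hα, hβ, ← sub_smul]
    have hwu' : w - u' = (w - u) - α • (v - u) := by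
      have : w - u' = (w - u) - (u' - u) := by abel
      rw [this, hα]
    rw [hvu', hwu', cross_smul_left, cross_sub_right, cross_smul_right, cross_self]
    ring
  constructor
  · intro h
    have : (β - α) * cross (v - u) (w - u) = 0 := by rw [← key]; exact h
    rcases mul_eq_zero.1 this with h' | h'
    · exact absurd h' hαβ
    · exact h'
  · intro h
    show cross (v' - u') (w - u') = 0
    rw [key, h, mul_zero]

lemma lineF_eq_lineF {u v u' v' : ℝ × ℝ} (huv : u ≠ v) (h1 : u' ∈ lineF U u v)
    (h2 : v' ∈ lineF U u v) (hne : u' ≠ v') : lineF U u' v' = lineF U u v := by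
  apply Finset.filter_congr
  intro w _
  exact col3_congr huv (mem_lineF.1 h1).2 (mem_lineF.1 h2).2 hne w

lemma lineF_mem_lines {u v : ℝ × ℝ} (hu : u ∈ U) (hv : v ∈ U) (hne : u ≠ v) :
    lineF U u v ∈ lines U := by
  apply Finset.mem_image.2
  exact ⟨(u, v), by simp [Finset.mem_filter, Finset.mem_product, hu, hv, hne], rfl⟩

lemma eq_lineF_of_mem_lines {S : Finset (ℝ × ℝ)} (hS : S ∈ lines U) {u' v' : ℝ × ℝ}
    (h1 : u' ∈ S) (h2 : v' ∈ S) (hne : u' ≠ v') : S = lineF U u' v' := by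
  obtain ⟨z, hz, rfl⟩ := Finset.mem_image.1 hS
  have hz' := Finset.mem_filter.1 hz
  exact (lineF_eq_lineF hz'.2 h1 h2 hne).symm

lemma lines_eq_of_two_mem {S S' : Finset (ℝ × ℝ)} (hS : S ∈ lines U) (hS' : S' ∈ lines U)
    {u v : ℝ × ℝ} (hne : u ≠ v) (h1 : u ∈ S) (h2 : v ∈ S) (h1' : u ∈ S') (h2' : v ∈ S') :
    S = S' := by
  rw [eq_lineF_of_mem_lines hS h1 h2 hne, eq_lineF_of_mem_lines hS' h1' h2' hne]

/-- monotone structure of a line -/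
def Mono (S : Finset (ℝ × ℝ)) : Prop :=
  (∀ w ∈ S, ∀ w' ∈ S, w.1 = w'.1) ∨
    ∃ s : ℝ, ∀ w ∈ S, ∀ w' ∈ S, w'.2 - w.2 = s * (w'.1 - w.1)

lemma mono_of_mem_lines {S : Finset (ℝ × ℝ)} (hS : S ∈ lines U) : Mono S := by
  obtain ⟨z, hz, rfl⟩ := Finset.mem_image.1 hS
  have hne := (Finset.mem_filter.1 hz).2
  set u := z.1
  set v := z.2
  by_cases h1 : v.1 - u.1 = 0
  · left
    intro w hw w' hw'
    obtain ⟨r, hr⟩ := exists_smul_of_col3 hne (mem_lineF.1 hw).2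
    obtain ⟨r', hr'⟩ := exists_smul_of_col3 hne (mem_lineF.1 hw').2
    have e1 : w.1 - u.1 = r * (v.1 - u.1) := congrArg Prod.fst hr
    have e2 : w'.1 - u.1 = r' * (v.1 - u.1) := congrArg Prod.fst hr'
    rw [h1] at e1 e2
    simp only [mul_zero] at e1 e2
    linarith
  · right
    refine ⟨(v.2 - u.2) / (v.1 - u.1), ?_⟩
    intro w hw w' hw'
    obtain ⟨r, hr⟩ := exists_smul_of_col3 hne (mem_lineF.1 hw).2
    obtain ⟨r', hr'⟩ := exists_smul_of_col3 hne (mem_lineF.1 hw').2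
    have e1 : w.1 - u.1 = r * (v.1 - u.1) := congrArg Prod.fst hr
    have e2 : w'.1 - u.1 = r' * (v.1 - u.1) := congrArg Prod.fst hr'
    have f1 : w.2 - u.2 = r * (v.2 - u.2) := congrArg Prod.snd hr
    have f2 : w'.2 - u.2 = r' * (v.2 - u.2) := congrArg Prod.snd hr'
    field_simp
    linear_combination (v.1 - u.1) * f2 - (v.1 - u.1) * f1 - (v.2 - u.2) * e2 + (v.2 - u.2) * e1

lemma Mono.card_inter_grid {S : Finset (ℝ × ℝ)} (h : Mono S) (X Y : Finset ℝ) :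
    (S ∩ X ×ˢ Y).card ≤ max X.card Y.card := by
  rcases h with h | ⟨s, h⟩
  · refine le_trans (Finset.card_le_card_of_injOn (fun w => w.2) ?_ ?_) (le_max_right _ _)
    · intro w hw
      exact (Finset.mem_product.1 (Finset.mem_inter.1 hw).2).2
    · intro w hw w' hw' he
      have hw1 := (Finset.mem_inter.1 (Finset.mem_coe.1 hw)).1
      have hw1' := (Finset.mem_inter.1 (Finset.mem_coe.1 hw')).1
      exact Prod.ext (h w hw1 w' hw1') he
  · refine le_trans (Finset.card_le_card_of_injOn (fun w => w.1) ?_ ?_) (le_max_left _ _)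
    · intro w hw
      exact (Finset.mem_product.1 (Finset.mem_inter.1 hw).2).1
    · intro w hw w' hw' he
      have hw1 := (Finset.mem_inter.1 (Finset.mem_coe.1 hw)).1
      have hw1' := (Finset.mem_inter.1 (Finset.mem_coe.1 hw')).1
      have he' : w.1 = w'.1 := he
      have := h w hw1 w' hw1'
      rw [he', sub_self, mul_zero, sub_eq_zero] at this
      exact Prod.ext he' this.symm

/-! ### Counting lemmas -/

lemma nat_mul_sub_one (x : ℕ) : x * x - x = x * (x - 1) := by
  cases x with
  | zero => rfl
  | succ n => simp [Nat.succ_sub_one, Nat.mul_succ, Nat.succ_mul]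

lemma offDiag_disjoint {F : Finset (Finset (ℝ × ℝ))} (hF : F ⊆ lines U)
    (P : Finset (ℝ × ℝ)) : ∀ S ∈ F, ∀ S' ∈ F, S ≠ S' →
      Disjoint ((S ∩ P).offDiag) ((S' ∩ P).offDiag) := by
  intro S hS S' hS' hne
  rw [Finset.disjoint_left]
  rintro ⟨x, y⟩ hxy hxy'
  obtain ⟨hx, hy, hxyne⟩ := Finset.mem_offDiag.1 hxy
  obtain ⟨hx', hy', -⟩ := Finset.mem_offDiag.1 hxy'
  exact hne (lines_eq_of_two_mem (hF hS) (hF hS') hxyne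
    (Finset.mem_inter.1 hx).1 (Finset.mem_inter.1 hy).1
    (Finset.mem_inter.1 hx').1 (Finset.mem_inter.1 hy').1)

lemma sum_pairs {F : Finset (Finset (ℝ × ℝ))} (hF : F ⊆ lines U) (P : Finset (ℝ × ℝ)) :
    ∑ S ∈ F, (S ∩ P).card * ((S ∩ P).card - 1) ≤ P.card * P.card := by
  have e1 : ∀ S, (S ∩ P).card * ((S ∩ P).card - 1) = ((S ∩ P).offDiag).card := by
    intro S
    rw [Finset.offDiag_card, nat_mul_sub_one]
  calc ∑ S ∈ F, (S ∩ P).card * ((S ∩ P).card - 1)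
      = ∑ S ∈ F, ((S ∩ P).offDiag).card := by
        apply Finset.sum_congr rfl
        intro S _
        exact e1 S
    _ = (F.biUnion (fun S => (S ∩ P).offDiag)).card :=
        (Finset.card_biUnion (offDiag_disjoint hF P)).symm
    _ ≤ P.offDiag.card := by
        apply Finset.card_le_card
        intro z hz
        obtain ⟨S, hS, hzS⟩ := Finset.mem_biUnion.1 hz
        obtain ⟨hx, hy, hne⟩ := Finset.mem_offDiag.1 hzS
        exact Finset.mem_offDiag.2 ⟨(Finset.mem_inter.1 hx).2, (Finset.mem_inter.1 hy).2, hne⟩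
    _ ≤ P.card * P.card := by
        rw [Finset.offDiag_card]
        exact Nat.sub_le _ _

lemma pencil {F : Finset (Finset (ℝ × ℝ))} (hF : F ⊆ lines U) (q : ℝ × ℝ)
    (hq : ∀ S ∈ F, q ∈ S) (P : Finset (ℝ × ℝ)) :
    ∑ S ∈ F, ((S ∩ P).card - 1) ≤ P.card := by
  calc ∑ S ∈ F, ((S ∩ P).card - 1)
      ≤ ∑ S ∈ F, ((S ∩ P).erase q).card :=
        Finset.sum_le_sum (fun S _ => Finset.pred_card_le_card_erase)
    _ = (F.biUnion (fun S => (S ∩ P).erase q)).card := by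
        symm
        apply Finset.card_biUnion
        intro S hS S' hS' hne
        rw [Function.onFun, Finset.disjoint_left]
        intro w hw hw'
        obtain ⟨hwq, hwS⟩ := Finset.mem_erase.1 hw
        obtain ⟨-, hwS'⟩ := Finset.mem_erase.1 hw'
        exact hne (lines_eq_of_two_mem (hF hS) (hF hS') (Ne.symm hwq)
          (hq S hS) (Finset.mem_inter.1 hwS).1 (hq S' hS') (Finset.mem_inter.1 hwS').1)
    _ ≤ P.card := by
        apply Finset.card_le_card
        intro w hw
        obtain ⟨S, hS, hwS⟩ := Finset.mem_biUnion.1 hw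
        exact (Finset.mem_inter.1 (Finset.mem_erase.1 hwS).2).2

lemma sum_biUnion_le_nat {α β : Type*} [DecidableEq α] [DecidableEq β] {s : Finset α}
    {t : α → Finset β} (f : β → ℕ) :
    ∑ b ∈ s.biUnion t, f b ≤ ∑ a ∈ s, ∑ b ∈ t a, f b := by
  induction s using Finset.induction_on with
  | empty => simp
  | @insert a s ha ih =>
    rw [Finset.biUnion_insert, Finset.sum_insert ha]
    have h1 : ∑ b ∈ t a ∪ s.biUnion t, f b ≤ ∑ b ∈ t a, f b + ∑ b ∈ s.biUnion t, f b := by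
      have := Finset.sum_union_inter (s₁ := t a) (s₂ := s.biUnion t) (f := f)
      omega
    exact le_trans h1 (Nat.add_le_add le_rfl ih)

/-! ### Grid cell decomposition -/

def rk (A : Finset ℝ) (x : ℝ) : ℕ := (A.filter (· < x)).card

def blk (A : Finset ℝ) (r : ℕ) (x : ℝ) : ℕ := rk A x * r / A.card

def cellmap (A : Finset ℝ) (r : ℕ) (w : ℝ × ℝ) : ℕ × ℕ := (blk A r w.1, blk A r w.2)

def gcell (A : Finset ℝ) (r : ℕ) (c : ℕ × ℕ) : Finset (ℝ × ℝ) :=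
  (A ×ˢ A).filter (fun w => cellmap A r w = c)

lemma rk_mono (A : Finset ℝ) {x y : ℝ} (h : x ≤ y) : rk A x ≤ rk A y := by
  apply Finset.card_le_card
  intro a ha
  have := Finset.mem_filter.1 ha
  exact Finset.mem_filter.2 ⟨this.1, lt_of_lt_of_le this.2 h⟩

lemma rk_strict (A : Finset ℝ) {x y : ℝ} (hx : x ∈ A) (h : x < y) : rk A x < rk A y := by
  have : insert x (A.filter (· < x)) ⊆ A.filter (· < y) := by
    intro a ha
    rcases Finset.mem_insert.1 ha with rfl | ha
    · exact Finset.mem_filter.2 ⟨hx, h⟩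
    · have := Finset.mem_filter.1 ha
      exact Finset.mem_filter.2 ⟨this.1, lt_trans this.2 h⟩
  have hcard := Finset.card_le_card this
  rw [Finset.card_insert_of_notMem (by simp)] at hcard
  exact hcard

lemma rk_injOn (A : Finset ℝ) : Set.InjOn (rk A) A := by
  intro x hx y hy h
  by_contra hne
  rcases lt_or_gt_of_ne hne with hlt | hlt
  · exact absurd h (Nat.ne_of_lt (rk_strict A hx hlt))
  · exact absurd h.symm (Nat.ne_of_lt (rk_strict A hy hlt))

lemma rk_lt (A : Finset ℝ) {x : ℝ} (hx : x ∈ A) : rk A x < A.card := by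
  apply Finset.card_lt_card
  constructor
  · exact Finset.filter_subset _ _
  · intro hsub
    have := Finset.mem_filter.1 (hsub hx)
    exact lt_irrefl x this.2

lemma blk_mono (A : Finset ℝ) (r : ℕ) {x y : ℝ} (h : x ≤ y) : blk A r x ≤ blk A r y :=
  Nat.div_le_div_right (Nat.mul_le_mul_right r (rk_mono A h))

lemma blk_lt (A : Finset ℝ) {r : ℕ} (hr : 0 < r) {x : ℝ} (hx : x ∈ A) : blk A r x < r := by
  have hq : 0 < A.card := Finset.card_pos.2 ⟨x, hx⟩
  rw [blk, Nat.div_lt_iff_lt_mul hq]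
  calc rk A x * r < A.card * r := (Nat.mul_lt_mul_right hr).2 (rk_lt A hx)
    _ = r * A.card := Nat.mul_comm _ _

lemma fiber_card (A : Finset ℝ) {r : ℕ} (hr : 0 < r) (i : ℕ) :
    (A.filter (fun a => blk A r a = i)).card ≤ (A.card - 1) / r + 1 := by
  set Fi := A.filter (fun a => blk A r a = i) with hFi
  rcases Fi.eq_empty_or_nonempty with h | h
  · simp [h]
  obtain ⟨a₀, ha₀, hmin⟩ := Fi.exists_min_image (fun a => rk A a) h
  have hq : 0 < A.card := Finset.card_pos.2 ⟨a₀, (Finset.mem_filter.1 ha₀).1⟩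
  have key : ∀ a ∈ Fi, rk A a ≤ rk A a₀ + (A.card - 1) / r := by
    intro a ha
    have hblk : blk A r a = i := (Finset.mem_filter.1 ha).2
    have hblk₀ : blk A r a₀ = i := (Finset.mem_filter.1 ha₀).2
    have h1 : i * A.card ≤ rk A a₀ * r := by
      rw [← Nat.le_div_iff_mul_le hq]
      exact le_of_eq hblk₀.symm
    have h2 : rk A a * r < (i + 1) * A.card := by
      rw [← Nat.div_lt_iff_lt_mul hq]
      exact lt_of_le_of_lt (le_of_eq hblk) (Nat.lt_succ_self i)
    have h3 : (rk A a - rk A a₀) * r ≤ A.card - 1 := by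
      rw [Nat.sub_mul]
      have := Nat.add_mul i 1 A.card
      omega
    have h4 : rk A a - rk A a₀ ≤ (A.card - 1) / r := (Nat.le_div_iff_mul_le hr).2 h3
    generalize (A.card - 1) / r = D at h4 ⊢
    omega
  have hinj : Set.InjOn (rk A) Fi := fun x hx y hy hxy =>
    rk_injOn A ((Finset.mem_filter.1 hx).1) ((Finset.mem_filter.1 hy).1) hxy
  calc Fi.card = (Fi.image (rk A)).card := (Finset.card_image_of_injOn hinj).symm
    _ ≤ (Finset.Icc (rk A a₀) (rk A a₀ + (A.card - 1) / r)).card := by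
        apply Finset.card_le_card
        intro x hx
        obtain ⟨a, ha, rfl⟩ := Finset.mem_image.1 hx
        exact Finset.mem_Icc.2 ⟨hmin a ha, key a ha⟩
    _ = (A.card - 1) / r + 1 := by
        rw [Nat.card_Icc]
        generalize (A.card - 1) / r = D
        omega

lemma sum_fiber (A : Finset ℝ) {r : ℕ} (hr : 0 < r) :
    ∑ i ∈ Finset.range r, (A.filter (fun a => blk A r a = i)).card = A.card :=
  (Finset.card_eq_sum_card_fiberwise
    (fun a ha => Finset.mem_range.2 (blk_lt A hr ha))).symm

lemma sum_fiber_sq (A : Finset ℝ) {r : ℕ} (hr : 0 < r) :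
    ∑ i ∈ Finset.range r, ((A.filter (fun a => blk A r a = i)).card) ^ 2 ≤
      ((A.card - 1) / r + 1) * A.card := by
  calc ∑ i ∈ Finset.range r, ((A.filter (fun a => blk A r a = i)).card) ^ 2
      ≤ ∑ i ∈ Finset.range r, ((A.card - 1) / r + 1) *
          (A.filter (fun a => blk A r a = i)).card := by
        apply Finset.sum_le_sum
        intro i _
        rw [pow_two]
        exact Nat.mul_le_mul_right _ (fiber_card A hr i)
    _ = ((A.card - 1) / r + 1) * A.card := by
        rw [← Finset.mul_sum, sum_fiber A hr]

lemma gcell_eq (A : Finset ℝ) (r : ℕ) (c : ℕ × ℕ) :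
    gcell A r c = (A.filter (fun a => blk A r a = c.1)) ×ˢ
      (A.filter (fun a => blk A r a = c.2)) := by
  ext ⟨a, b⟩
  simp only [gcell, cellmap, Finset.mem_filter, Finset.mem_product, Prod.ext_iff]
  tauto

lemma sum_gcell_sq (A : Finset ℝ) {r : ℕ} (hr : 0 < r) :
    ∑ c ∈ Finset.range r ×ˢ Finset.range r, ((gcell A r c).card) ^ 2 ≤
      (((A.card - 1) / r + 1) * A.card) ^ 2 := by
  have e : ∀ c : ℕ × ℕ, (gcell A r c).card =
      (A.filter (fun a => blk A r a = c.1)).card *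
        (A.filter (fun a => blk A r a = c.2)).card := by
    intro c
    rw [gcell_eq, Finset.card_product]
  calc ∑ c ∈ Finset.range r ×ˢ Finset.range r, ((gcell A r c).card) ^ 2
      = (∑ i ∈ Finset.range r, ((A.filter (fun a => blk A r a = i)).card) ^ 2) *
        (∑ j ∈ Finset.range r, ((A.filter (fun a => blk A r a = j)).card) ^ 2) := by
        rw [Finset.sum_product, Finset.sum_mul_sum]
        apply Finset.sum_congr rfl
        intro i _
        apply Finset.sum_congr rfl
        intro j _
        rw [e (i, j), mul_pow]
    _ ≤ (((A.card - 1) / r + 1) * A.card) * (((A.card - 1) / r + 1) * A.card) :=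
        Nat.mul_le_mul (sum_fiber_sq A hr) (sum_fiber_sq A hr)
    _ = (((A.card - 1) / r + 1) * A.card) ^ 2 := (pow_two _).symm

/-! ### The staircase lemma -/

lemma stair (A : Finset ℝ) {r : ℕ} (hr : 0 < r) {S T : Finset (ℝ × ℝ)} (hS : Mono S)
    (hTS : T ⊆ S) (hTA : T ⊆ A ×ˢ A) :
    (T.image (cellmap A r)).card ≤ 2 * r - 1 := by
  have hmem : ∀ w ∈ T, blk A r w.1 < r ∧ blk A r w.2 < r := by
    intro w hw
    have := Finset.mem_product.1 (hTA hw)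
    exact ⟨blk_lt A hr this.1, blk_lt A hr this.2⟩
  rcases hS with hS | ⟨s, hS⟩
  · -- vertical line : all first coordinates equal
    rcases T.eq_empty_or_nonempty with h | ⟨w₀, hw₀⟩
    · simp [h]
    calc (T.image (cellmap A r)).card
        ≤ ({blk A r w₀.1} ×ˢ Finset.range r).card := by
          apply Finset.card_le_card
          intro c hc
          obtain ⟨w, hw, rfl⟩ := Finset.mem_image.1 hc
          apply Finset.mem_product.2
          constructor
          · simp only [cellmap, Finset.mem_singleton]
            exact congrArg (fun t => blk A r t) (hS w (hTS hw) w₀ (hTS hw₀))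
          · exact Finset.mem_range.2 (hmem w hw).2
      _ = r := by rw [Finset.card_product, Finset.card_singleton, Finset.card_range, one_mul]
      _ ≤ 2 * r - 1 := by omega
  · rcases le_or_gt 0 s with hs | hs
    · -- nonnegative slope : use c.1 + c.2
      refine le_trans (Finset.card_le_card_of_injOn (fun c => c.1 + c.2) ?_ ?_)
        (le_of_eq (Finset.card_range _))
      · intro c hc
        obtain ⟨w, hw, rfl⟩ := Finset.mem_image.1 hc
        have := hmem w hw
        simp only [cellmap]
        apply Finset.mem_range.2
        omega
      · intro c hc c' hc' he
        obtain ⟨w, hw, rfl⟩ := Finset.mem_image.1 (Finset.mem_coe.1 hc)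
        obtain ⟨w', hw', rfl⟩ := Finset.mem_image.1 (Finset.mem_coe.1 hc')
        have he' : blk A r w.1 + blk A r w.2 = blk A r w'.1 + blk A r w'.2 := he
        have key : ∀ u ∈ T, ∀ u' ∈ T, u.1 ≤ u'.1 →
            blk A r u.1 + blk A r u.2 = blk A r u'.1 + blk A r u'.2 →
            cellmap A r u = cellmap A r u' := by
          intro u hu u' hu' hle hsum
          have h1 : blk A r u.1 ≤ blk A r u'.1 := blk_mono A r hle
          have hy : u.2 ≤ u'.2 := by
            have := hS u (hTS hu) u' (hTS hu')
            nlinarith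
          have h2 : blk A r u.2 ≤ blk A r u'.2 := blk_mono A r hy
          have : blk A r u.1 = blk A r u'.1 ∧ blk A r u.2 = blk A r u'.2 := by omega
          exact Prod.ext this.1 this.2
        rcases le_total w.1 w'.1 with h | h
        · exact key w hw w' hw' h he'
        · exact (key w' hw' w hw h he'.symm).symm
    · -- negative slope : use c.1 + (r - 1 - c.2)
      refine le_trans (Finset.card_le_card_of_injOn (fun c => c.1 + (r - 1 - c.2)) ?_ ?_)
        (le_of_eq (Finset.card_range _))
      · intro c hc
        obtain ⟨w, hw, rfl⟩ := Finset.mem_image.1 hc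
        have := hmem w hw
        simp only [cellmap]
        apply Finset.mem_range.2
        omega
      · intro c hc c' hc' he
        obtain ⟨w, hw, rfl⟩ := Finset.mem_image.1 (Finset.mem_coe.1 hc)
        obtain ⟨w', hw', rfl⟩ := Finset.mem_image.1 (Finset.mem_coe.1 hc')
        have he' : blk A r w.1 + (r - 1 - blk A r w.2) =
            blk A r w'.1 + (r - 1 - blk A r w'.2) := he
        have key : ∀ u ∈ T, ∀ u' ∈ T, u.1 ≤ u'.1 →
            blk A r u.1 + (r - 1 - blk A r u.2) = blk A r u'.1 + (r - 1 - blk A r u'.2) →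
            cellmap A r u = cellmap A r u' := by
          intro u hu u' hu' hle hsum
          have h1 : blk A r u.1 ≤ blk A r u'.1 := blk_mono A r hle
          have hy : u'.2 ≤ u.2 := by
            have := hS u (hTS hu) u' (hTS hu')
            nlinarith
          have h2 : blk A r u'.2 ≤ blk A r u.2 := blk_mono A r hy
          have hu2 := (hmem u hu).2
          have hu2' := (hmem u' hu').2
          have : blk A r u.1 = blk A r u'.1 ∧ blk A r u.2 = blk A r u'.2 := by omega
          exact Prod.ext this.1 this.2
        rcases le_total w.1 w'.1 with h | h
        · exact key w hw w' hw' h he'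
        · exact (key w' hw' w hw h he'.symm).symm

/-! ### Per-line cell bound and the Szemerédi–Trotter type inequality -/

lemma le_one_add_mul_pred (x : ℕ) (hx : 1 ≤ x) : x ≤ 1 + x * (x - 1) := by
  cases x with
  | zero => omega
  | succ y =>
    have h : y ≤ (y + 1) * y := Nat.le_mul_of_pos_left y (Nat.succ_pos y)
    have h2 : (y + 1) - 1 = y := Nat.succ_sub_one y
    rw [h2, Nat.add_comm 1]
    exact Nat.succ_le_succ h

lemma perline (A : Finset ℝ) {r : ℕ} (hr : 0 < r) {S : Finset (ℝ × ℝ)} (hS : Mono S) :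
    (S ∩ A ×ˢ A).card ≤ (2 * r - 1) +
      ∑ c ∈ Finset.range r ×ˢ Finset.range r,
        (S ∩ gcell A r c).card * ((S ∩ gcell A r c).card - 1) := by
  set T := S ∩ A ×ˢ A with hT
  have hTS : T ⊆ S := Finset.inter_subset_left
  have hTA : T ⊆ A ×ˢ A := Finset.inter_subset_right
  have hfib : ∀ c : ℕ × ℕ, T.filter (fun w => cellmap A r w = c) = S ∩ gcell A r c := by
    intro c
    ext w
    simp only [hT, gcell, Finset.mem_filter, Finset.mem_inter]
    tauto
  have e1 : T.card = ∑ c ∈ T.image (cellmap A r), (T.filter (fun w => cellmap A r w = c)).card :=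
    Finset.card_eq_sum_card_image (cellmap A r) T
  have e2 : ∀ c ∈ T.image (cellmap A r),
      (T.filter (fun w => cellmap A r w = c)).card ≤
        1 + (T.filter (fun w => cellmap A r w = c)).card *
          ((T.filter (fun w => cellmap A r w = c)).card - 1) := by
    intro c hc
    obtain ⟨w, hw, rfl⟩ := Finset.mem_image.1 hc
    apply le_one_add_mul_pred
    rw [Nat.one_le_iff_ne_zero, ← Nat.pos_iff_ne_zero, Finset.card_pos]
    exact ⟨w, Finset.mem_filter.2 ⟨hw, rfl⟩⟩
  calc T.card ≤ ∑ c ∈ T.image (cellmap A r),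
        (1 + (T.filter (fun w => cellmap A r w = c)).card *
          ((T.filter (fun w => cellmap A r w = c)).card - 1)) := by
        rw [e1]
        exact Finset.sum_le_sum e2
    _ = (T.image (cellmap A r)).card + ∑ c ∈ T.image (cellmap A r),
          (T.filter (fun w => cellmap A r w = c)).card *
            ((T.filter (fun w => cellmap A r w = c)).card - 1) := by
        rw [Finset.sum_add_distrib, Finset.sum_const, smul_eq_mul, mul_one]
    _ ≤ (2 * r - 1) + ∑ c ∈ Finset.range r ×ˢ Finset.range r,
          (T.filter (fun w => cellmap A r w = c)).card *
            ((T.filter (fun w => cellmap A r w = c)).card - 1) := by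
        apply Nat.add_le_add (stair A hr hS hTS hTA)
        apply Finset.sum_le_sum_of_subset
        intro c hc
        obtain ⟨w, hw, rfl⟩ := Finset.mem_image.1 hc
        have := Finset.mem_product.1 (hTA hw)
        exact Finset.mem_product.2 ⟨Finset.mem_range.2 (blk_lt A hr this.1),
          Finset.mem_range.2 (blk_lt A hr this.2)⟩
    _ = (2 * r - 1) + ∑ c ∈ Finset.range r ×ˢ Finset.range r,
          (S ∩ gcell A r c).card * ((S ∩ gcell A r c).card - 1) := by
        congr 1
        apply Finset.sum_congr rfl
        intro c _
        rw [hfib c]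

theorem ST {U : Finset (ℝ × ℝ)} {F : Finset (Finset (ℝ × ℝ))} (hF : F ⊆ lines U)
    (A : Finset ℝ) {k : ℕ} (hk : 2 ≤ k)
    (hrich : ∀ S ∈ F, k ≤ (S ∩ A ×ˢ A).card) :
    k ^ 3 * F.card ≤ 2048 * A.card ^ 4 := by
  rcases F.eq_empty_or_nonempty with h | ⟨S₀, hS₀⟩
  · simp [h]
  set q := A.card with hq
  have hkq : k ≤ q := by
    refine le_trans (hrich S₀ hS₀) ?_
    have := (mono_of_mem_lines (hF hS₀)).card_inter_grid A A
    simpa using this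
  have hq0 : 0 < q := lt_of_lt_of_le (by omega) hkq
  -- the trivial double-counting bound
  have hpairs : k * (k - 1) * F.card ≤ q ^ 2 * q ^ 2 := by
    have h1 : ∀ S ∈ F, k * (k - 1) ≤ (S ∩ A ×ˢ A).card * ((S ∩ A ×ˢ A).card - 1) := by
      intro S hS
      exact Nat.mul_le_mul (hrich S hS) (by have := hrich S hS; omega)
    calc k * (k - 1) * F.card = F.card * (k * (k - 1)) := Nat.mul_comm _ _
      _ = ∑ _S ∈ F, k * (k - 1) := by rw [Finset.sum_const, smul_eq_mul]
      _ ≤ ∑ S ∈ F, (S ∩ A ×ˢ A).card * ((S ∩ A ×ˢ A).card - 1) := Finset.sum_le_sum h1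
      _ ≤ (A ×ˢ A).card * (A ×ˢ A).card := sum_pairs hF (A ×ˢ A)
      _ = q ^ 2 * q ^ 2 := by rw [Finset.card_product, ← hq]; ring
  by_cases hk8 : k < 8
  · -- small k
    obtain ⟨k', rfl⟩ : ∃ k', k = k' + 1 := ⟨k - 1, by omega⟩
    have hk1 : 1 ≤ k' := by omega
    have h2 : (k' + 1) ^ 3 * F.card ≤ 49 * ((k' + 1) * k' * F.card) := by
      have e : (k' + 1) ^ 3 * F.card = (k' + 1) ^ 2 * ((k' + 1) * F.card) := by ring
      rw [e]
      have h3 : (k' + 1) ^ 2 ≤ 49 := by nlinarith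
      have h4 : (k' + 1) * F.card ≤ (k' + 1) * k' * F.card := by
        have : k' + 1 ≤ (k' + 1) * k' := Nat.le_mul_of_pos_right _ (by omega)
        exact Nat.mul_le_mul_right _ this
      calc (k' + 1) ^ 2 * ((k' + 1) * F.card) ≤ 49 * ((k' + 1) * F.card) :=
            Nat.mul_le_mul_right _ h3
        _ ≤ 49 * ((k' + 1) * k' * F.card) := Nat.mul_le_mul_left _ h4
    have h5 : (k' + 1) * k' * F.card ≤ q ^ 2 * q ^ 2 := by
      simpa using hpairs
    calc (k' + 1) ^ 3 * F.card ≤ 49 * ((k' + 1) * k' * F.card) := h2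
      _ ≤ 49 * (q ^ 2 * q ^ 2) := Nat.mul_le_mul_left _ h5
      _ ≤ 2048 * q ^ 4 := by nlinarith
  · -- large k : cell decomposition
    push_neg at hk8
    set r := k / 4 with hrdef
    have hr0 : 0 < r := by omega
    have h4r : 4 * r ≤ k := by omega
    have h8r : k ≤ 8 * r := by omega
    have hrq : r ≤ q := by omega
    set g := (q - 1) / r + 1 with hgdef
    -- incidence bound
    have hinc : k * F.card ≤ (2 * r - 1) * F.card + (g * q) ^ 2 := by
      calc k * F.card = F.card * k := Nat.mul_comm _ _
        _ = ∑ _S ∈ F, k := by rw [Finset.sum_const, smul_eq_mul]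
        _ ≤ ∑ S ∈ F, (S ∩ A ×ˢ A).card := Finset.sum_le_sum hrich
        _ ≤ ∑ S ∈ F, ((2 * r - 1) +
            ∑ c ∈ Finset.range r ×ˢ Finset.range r,
              (S ∩ gcell A r c).card * ((S ∩ gcell A r c).card - 1)) :=
            Finset.sum_le_sum (fun S hS => perline A hr0 (mono_of_mem_lines (hF hS)))
        _ = (2 * r - 1) * F.card +
            ∑ S ∈ F, ∑ c ∈ Finset.range r ×ˢ Finset.range r,
              (S ∩ gcell A r c).card * ((S ∩ gcell A r c).card - 1) := by
            rw [Finset.sum_add_distrib, Finset.sum_const, smul_eq_mul, Nat.mul_comm]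
        _ = (2 * r - 1) * F.card +
            ∑ c ∈ Finset.range r ×ˢ Finset.range r, ∑ S ∈ F,
              (S ∩ gcell A r c).card * ((S ∩ gcell A r c).card - 1) := by
            rw [Finset.sum_comm]
        _ ≤ (2 * r - 1) * F.card +
            ∑ c ∈ Finset.range r ×ˢ Finset.range r, (gcell A r c).card * (gcell A r c).card := by
            apply Nat.add_le_add_left
            apply Finset.sum_le_sum
            intro c _
            exact sum_pairs hF (gcell A r c)
        _ ≤ (2 * r - 1) * F.card + (g * q) ^ 2 := by
            apply Nat.add_le_add_left
            calc ∑ c ∈ Finset.range r ×ˢ Finset.range r, (gcell A r c).card * (gcell A r c).card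
                = ∑ c ∈ Finset.range r ×ˢ Finset.range r, (gcell A r c).card ^ 2 := by
                  apply Finset.sum_congr rfl
                  intro c _
                  rw [pow_two]
              _ ≤ (g * q) ^ 2 := sum_gcell_sq A hr0
    have hhalf : k * F.card ≤ 2 * (g * q) ^ 2 := by
      have h1 : 2 * ((2 * r - 1) * F.card) ≤ k * F.card := by
        have : 2 * (2 * r - 1) ≤ k := by omega
        calc 2 * ((2 * r - 1) * F.card) = (2 * (2 * r - 1)) * F.card := by ring
          _ ≤ k * F.card := Nat.mul_le_mul_right _ this
      omega
    have hkg : k * g ≤ 16 * q := by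
      have h1 : r * ((q - 1) / r) ≤ q - 1 := Nat.mul_div_le _ _
      have h2 : r * g ≤ q - 1 + r := by
        rw [hgdef, Nat.mul_add, Nat.mul_one]
        omega
      have h3 : k * g ≤ 8 * (r * g) := by
        calc k * g ≤ (8 * r) * g := Nat.mul_le_mul_right _ h8r
          _ = 8 * (r * g) := by ring
      have h4 : 8 * (r * g) ≤ 8 * (q - 1 + r) := Nat.mul_le_mul_left _ h2
      omega
    calc k ^ 3 * F.card = k ^ 2 * (k * F.card) := by ring
      _ ≤ k ^ 2 * (2 * (g * q) ^ 2) := Nat.mul_le_mul_left _ hhalf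
      _ = 2 * (k * g) ^ 2 * q ^ 2 := by ring
      _ ≤ 2 * (16 * q) ^ 2 * q ^ 2 := by
          apply Nat.mul_le_mul_right
          apply Nat.mul_le_mul_left
          exact Nat.pow_le_pow_left hkg 2
      _ = 512 * q ^ 4 := by ring
      _ ≤ 2048 * q ^ 4 := Nat.mul_le_mul_right _ (by omega)

/-! ### cross and pencil counting bounds for families of lines -/

lemma card_le_cross {U : Finset (ℝ × ℝ)} {F : Finset (Finset (ℝ × ℝ))} (hF : F ⊆ lines U)
    (P Q : Finset (ℝ × ℝ))
    (h : ∀ S ∈ F, ∃ u v, u ∈ S ∩ P ∧ v ∈ S ∩ Q ∧ u ≠ v) :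
    F.card ≤ P.card * Q.card := by
  have hsub : F ⊆ ((P ×ˢ Q).filter (fun z => z.1 ≠ z.2)).image (fun z => lineF U z.1 z.2) := by
    intro S hS
    obtain ⟨u, v, hu, hv, hne⟩ := h S hS
    apply Finset.mem_image.2
    refine ⟨(u, v), ?_, ?_⟩
    · exact Finset.mem_filter.2 ⟨Finset.mem_product.2
        ⟨(Finset.mem_inter.1 hu).2, (Finset.mem_inter.1 hv).2⟩, hne⟩
    · exact (eq_lineF_of_mem_lines (hF hS) (Finset.mem_inter.1 hu).1
        (Finset.mem_inter.1 hv).1 hne).symm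
  calc F.card ≤ _ := Finset.card_le_card hsub
    _ ≤ ((P ×ˢ Q).filter (fun z => z.1 ≠ z.2)).card := Finset.card_image_le
    _ ≤ (P ×ˢ Q).card := Finset.card_le_card (Finset.filter_subset _ _)
    _ = P.card * Q.card := Finset.card_product _ _

lemma card_le_pencil {U : Finset (ℝ × ℝ)} {F : Finset (Finset (ℝ × ℝ))} (hF : F ⊆ lines U)
    (P Q : Finset (ℝ × ℝ)) {k : ℕ}
    (hP : ∀ S ∈ F, ∃ u, u ∈ S ∩ P)
    (hQ : ∀ S ∈ F, k ≤ (S ∩ Q).card) :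
    (k - 1) * F.card ≤ P.card * Q.card := by
  have hsub : F ⊆ P.biUnion (fun q => F.filter (fun S => q ∈ S)) := by
    intro S hS
    obtain ⟨u, hu⟩ := hP S hS
    exact Finset.mem_biUnion.2 ⟨u, (Finset.mem_inter.1 hu).2,
      Finset.mem_filter.2 ⟨hS, (Finset.mem_inter.1 hu).1⟩⟩
  have hper : ∀ q ∈ P, (k - 1) * (F.filter (fun S => q ∈ S)).card ≤ Q.card := by
    intro q hq
    set F' := F.filter (fun S => q ∈ S) with hF'def
    have hF' : F' ⊆ lines U := fun S hS => hF (Finset.mem_filter.1 hS).1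
    have hpen : ∑ S ∈ F', ((S ∩ Q).card - 1) ≤ Q.card :=
      pencil hF' q (fun S hS => (Finset.mem_filter.1 hS).2) Q
    refine le_trans ?_ hpen
    calc (k - 1) * F'.card = F'.card * (k - 1) := Nat.mul_comm _ _
      _ = ∑ _S ∈ F', (k - 1) := by rw [Finset.sum_const, smul_eq_mul]
      _ ≤ ∑ S ∈ F', ((S ∩ Q).card - 1) := by
          apply Finset.sum_le_sum
          intro S hS
          have := hQ S (Finset.mem_filter.1 hS).1
          omega
  calc (k - 1) * F.card ≤ (k - 1) * ∑ q ∈ P, (F.filter (fun S => q ∈ S)).card := by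
        apply Nat.mul_le_mul_left
        exact le_trans (Finset.card_le_card hsub) Finset.card_biUnion_le
    _ = ∑ q ∈ P, (k - 1) * (F.filter (fun S => q ∈ S)).card := Finset.mul_sum _ _ _
    _ ≤ ∑ _q ∈ P, Q.card := Finset.sum_le_sum hper
    _ = P.card * Q.card := by rw [Finset.sum_const, smul_eq_mul]

/-! ### The triple set -/

variable (A₁ A₂ A₃ : Finset ℝ)

def UU : Finset (ℝ × ℝ) := (A₁ ∪ A₂ ∪ A₃) ×ˢ (A₁ ∪ A₂ ∪ A₃)

def Tfin : Finset ((ℝ × ℝ) × (ℝ × ℝ) × (ℝ × ℝ)) :=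
  ((A₁ ×ˢ A₁) ×ˢ (A₂ ×ˢ A₂) ×ˢ (A₃ ×ˢ A₃)).filter
    (fun z => z.1 ≠ z.2.1 ∧ z.1 ≠ z.2.2 ∧ z.2.1 ≠ z.2.2 ∧ col3 z.1 z.2.1 z.2.2)

def trip (S : Finset (ℝ × ℝ)) : Finset ((ℝ × ℝ) × (ℝ × ℝ) × (ℝ × ℝ)) :=
  (Tfin A₁ A₂ A₃).filter (fun z => z.1 ∈ S ∧ z.2.1 ∈ S ∧ z.2.2 ∈ S)

def LL2 : Finset (Finset (ℝ × ℝ)) :=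
  (lines (UU A₁ A₂ A₃)).filter
    (fun S => 0 < (trip A₁ A₂ A₃ S).card ∧ 2 ≤ (S ∩ A₃ ×ˢ A₃).card)

def CL (h i j : ℕ) : Finset (Finset (ℝ × ℝ)) :=
  (LL2 A₁ A₂ A₃).filter (fun S =>
    2 ^ h ≤ (S ∩ A₁ ×ˢ A₁).card ∧ (S ∩ A₁ ×ˢ A₁).card < 2 ^ (h + 1) ∧
    2 ^ i ≤ (S ∩ A₂ ×ˢ A₂).card ∧ (S ∩ A₂ ×ˢ A₂).card < 2 ^ (i + 1) ∧
    2 ^ j ≤ (S ∩ A₃ ×ˢ A₃).card ∧ (S ∩ A₃ ×ˢ A₃).card < 2 ^ (j + 1))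

variable {A₁ A₂ A₃}

lemma G1_subset : A₁ ×ˢ A₁ ⊆ UU A₁ A₂ A₃ :=
  Finset.product_subset_product
    (Finset.subset_union_left.trans Finset.subset_union_left)
    (Finset.subset_union_left.trans Finset.subset_union_left)

lemma G2_subset : A₂ ×ˢ A₂ ⊆ UU A₁ A₂ A₃ :=
  Finset.product_subset_product
    (Finset.subset_union_right.trans Finset.subset_union_left)
    (Finset.subset_union_right.trans Finset.subset_union_left)

lemma G3_subset : A₃ ×ˢ A₃ ⊆ UU A₁ A₂ A₃ :=
  Finset.product_subset_product Finset.subset_union_right Finset.subset_union_right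

lemma To_eq : To A₁ A₂ A₃ = (Tfin A₁ A₂ A₃).card := by
  rw [To, ← Set.ncard_coe_finset]
  congr 1
  ext z
  simp only [Tfin, Finset.coe_filter, Set.mem_setOf_eq, Finset.mem_product, Set.mem_prod,
    Finset.mem_coe, col3_iff_collinear]
  tauto

lemma mem_Tfin_gridmem {z : (ℝ × ℝ) × (ℝ × ℝ) × (ℝ × ℝ)} (hz : z ∈ Tfin A₁ A₂ A₃) :
    z.1 ∈ A₁ ×ˢ A₁ ∧ z.2.1 ∈ A₂ ×ˢ A₂ ∧ z.2.2 ∈ A₃ ×ˢ A₃ := by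
  have := (Finset.mem_filter.1 hz).1
  have h1 := (Finset.mem_product.1 this).1
  have h2 := Finset.mem_product.1 (Finset.mem_product.1 this).2
  exact ⟨h1, h2.1, h2.2⟩

lemma triple_line {z : (ℝ × ℝ) × (ℝ × ℝ) × (ℝ × ℝ)} (hz : z ∈ Tfin A₁ A₂ A₃) :
    lineF (UU A₁ A₂ A₃) z.1 z.2.1 ∈ lines (UU A₁ A₂ A₃) ∧
      z ∈ trip A₁ A₂ A₃ (lineF (UU A₁ A₂ A₃) z.1 z.2.1) := by
  obtain ⟨hg1, hg2, hg3⟩ := mem_Tfin_gridmem hz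
  obtain ⟨hne1, hne2, hne3, hcol⟩ := (Finset.mem_filter.1 hz).2
  have hu1 : z.1 ∈ UU A₁ A₂ A₃ := G1_subset hg1
  have hu2 : z.2.1 ∈ UU A₁ A₂ A₃ := G2_subset hg2
  have hu3 : z.2.2 ∈ UU A₁ A₂ A₃ := G3_subset hg3
  refine ⟨lineF_mem_lines hu1 hu2 hne1, ?_⟩
  apply Finset.mem_filter.2
  exact ⟨hz, left_mem_lineF hu1, right_mem_lineF hu2, mem_lineF.2 ⟨hu3, hcol⟩⟩

/-! ### Arithmetic per-class lemmas -/

lemma arith1 {c N m n p : ℕ} (h3 : c ^ 3 * N ≤ 2048 * p ^ 4) (h4 : N ≤ m ^ 2 * n ^ 2)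
    (hmn : m ≤ n) :
    (8 * (1 * 1 * c) * N) ^ 6 ≤ 2 ^ 84 * (m ^ 6 * n ^ 10 * p ^ 8) := by
  have hmn8 : m ^ 8 * n ^ 8 * p ^ 8 ≤ m ^ 6 * n ^ 10 * p ^ 8 := by
    apply Nat.mul_le_mul_right
    calc m ^ 8 * n ^ 8 = m ^ 6 * n ^ 8 * m ^ 2 := by ring
      _ ≤ m ^ 6 * n ^ 8 * n ^ 2 := Nat.mul_le_mul_left _ (Nat.pow_le_pow_left hmn 2)
      _ = m ^ 6 * n ^ 10 := by ring
  calc (8 * (1 * 1 * c) * N) ^ 6 = 2 ^ 18 * ((c ^ 3 * N) ^ 2 * N ^ 4) := by ring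
    _ ≤ 2 ^ 18 * ((2048 * p ^ 4) ^ 2 * (m ^ 2 * n ^ 2) ^ 4) :=
        Nat.mul_le_mul_left _ (Nat.mul_le_mul (Nat.pow_le_pow_left h3 2) (Nat.pow_le_pow_left h4 4))
    _ = 2 ^ 40 * (m ^ 8 * n ^ 8 * p ^ 8) := by ring
    _ ≤ 2 ^ 40 * (m ^ 6 * n ^ 10 * p ^ 8) := Nat.mul_le_mul_left _ hmn8
    _ ≤ 2 ^ 84 * (m ^ 6 * n ^ 10 * p ^ 8) :=
        Nat.mul_le_mul_right _ (Nat.pow_le_pow_right (by omega) (by omega))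

lemma arith2 {b c N m n p : ℕ} (h2 : b ^ 3 * N ≤ 2048 * n ^ 4) (h3 : c ^ 3 * N ≤ 2048 * p ^ 4)
    (h4 : b * N ≤ 2 * (m ^ 2 * n ^ 2)) :
    (8 * (1 * b * c) * N) ^ 6 ≤ 2 ^ 84 * (m ^ 6 * n ^ 10 * p ^ 8) := by
  calc (8 * (1 * b * c) * N) ^ 6
      = 2 ^ 18 * ((b ^ 3 * N) * ((c ^ 3 * N) ^ 2 * (b * N) ^ 3)) := by ring
    _ ≤ 2 ^ 18 * ((2048 * n ^ 4) * ((2048 * p ^ 4) ^ 2 * (2 * (m ^ 2 * n ^ 2)) ^ 3)) :=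
        Nat.mul_le_mul_left _ (Nat.mul_le_mul h2
          (Nat.mul_le_mul (Nat.pow_le_pow_left h3 2) (Nat.pow_le_pow_left h4 3)))
    _ = 2 ^ 54 * (m ^ 6 * n ^ 10 * p ^ 8) := by ring
    _ ≤ 2 ^ 84 * (m ^ 6 * n ^ 10 * p ^ 8) :=
        Nat.mul_le_mul_right _ (Nat.pow_le_pow_right (by omega) (by omega))

lemma arith3 {a c N m n p : ℕ} (h1 : a ^ 3 * N ≤ 2048 * m ^ 4) (h3 : c ^ 3 * N ≤ 2048 * p ^ 4)
    (h4 : a * N ≤ 2 * (n ^ 2 * m ^ 2)) (hmn : m ≤ n) :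
    (8 * (a * 1 * c) * N) ^ 6 ≤ 2 ^ 84 * (m ^ 6 * n ^ 10 * p ^ 8) := by
  have hmn8 : m ^ 10 * n ^ 6 * p ^ 8 ≤ m ^ 6 * n ^ 10 * p ^ 8 := by
    apply Nat.mul_le_mul_right
    calc m ^ 10 * n ^ 6 = m ^ 6 * n ^ 6 * m ^ 4 := by ring
      _ ≤ m ^ 6 * n ^ 6 * n ^ 4 := Nat.mul_le_mul_left _ (Nat.pow_le_pow_left hmn 4)
      _ = m ^ 6 * n ^ 10 := by ring
  calc (8 * (a * 1 * c) * N) ^ 6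
      = 2 ^ 18 * ((a ^ 3 * N) * ((c ^ 3 * N) ^ 2 * (a * N) ^ 3)) := by ring
    _ ≤ 2 ^ 18 * ((2048 * m ^ 4) * ((2048 * p ^ 4) ^ 2 * (2 * (n ^ 2 * m ^ 2)) ^ 3)) :=
        Nat.mul_le_mul_left _ (Nat.mul_le_mul h1
          (Nat.mul_le_mul (Nat.pow_le_pow_left h3 2) (Nat.pow_le_pow_left h4 3)))
    _ = 2 ^ 54 * (m ^ 10 * n ^ 6 * p ^ 8) := by ring
    _ ≤ 2 ^ 54 * (m ^ 6 * n ^ 10 * p ^ 8) := Nat.mul_le_mul_left _ hmn8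
    _ ≤ 2 ^ 84 * (m ^ 6 * n ^ 10 * p ^ 8) :=
        Nat.mul_le_mul_right _ (Nat.pow_le_pow_right (by omega) (by omega))

lemma arith4 {a b c N m n p : ℕ} (h1 : a ^ 3 * N ≤ 2048 * m ^ 4) (h2 : b ^ 3 * N ≤ 2048 * n ^ 4)
    (h3 : c ^ 3 * N ≤ 2048 * p ^ 4) (hmn : m ≤ n) :
    (8 * (a * b * c) * N) ^ 6 ≤ 2 ^ 84 * (m ^ 6 * n ^ 10 * p ^ 8) := by
  have hmn8 : m ^ 8 * n ^ 8 * p ^ 8 ≤ m ^ 6 * n ^ 10 * p ^ 8 := by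
    apply Nat.mul_le_mul_right
    calc m ^ 8 * n ^ 8 = m ^ 6 * n ^ 8 * m ^ 2 := by ring
      _ ≤ m ^ 6 * n ^ 8 * n ^ 2 := Nat.mul_le_mul_left _ (Nat.pow_le_pow_left hmn 2)
      _ = m ^ 6 * n ^ 10 := by ring
  calc (8 * (a * b * c) * N) ^ 6
      = 2 ^ 18 * ((a ^ 3 * N) ^ 2 * ((b ^ 3 * N) ^ 2 * (c ^ 3 * N) ^ 2)) := by ring
    _ ≤ 2 ^ 18 * ((2048 * m ^ 4) ^ 2 * ((2048 * n ^ 4) ^ 2 * (2048 * p ^ 4) ^ 2)) :=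
        Nat.mul_le_mul_left _ (Nat.mul_le_mul (Nat.pow_le_pow_left h1 2)
          (Nat.mul_le_mul (Nat.pow_le_pow_left h2 2) (Nat.pow_le_pow_left h3 2)))
    _ = 2 ^ 84 * (m ^ 8 * n ^ 8 * p ^ 8) := by ring
    _ ≤ 2 ^ 84 * (m ^ 6 * n ^ 10 * p ^ 8) := Nat.mul_le_mul_left _ hmn8

lemma arith_base {m n p : ℕ} (hmn : m ≤ n) (hnp : n ≤ p) :
    (m ^ 2 * n ^ 2) ^ 6 ≤ 2 ^ 84 * (m ^ 6 * n ^ 10 * p ^ 8) := by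
  have hmp : m ≤ p := le_trans hmn hnp
  calc (m ^ 2 * n ^ 2) ^ 6 = m ^ 6 * n ^ 10 * (m ^ 6 * n ^ 2) := by ring
    _ ≤ m ^ 6 * n ^ 10 * (p ^ 6 * p ^ 2) :=
        Nat.mul_le_mul_left _ (Nat.mul_le_mul (Nat.pow_le_pow_left hmp 6)
          (Nat.pow_le_pow_left hnp 2))
    _ = 1 * (m ^ 6 * n ^ 10 * p ^ 8) := by ring
    _ ≤ 2 ^ 84 * (m ^ 6 * n ^ 10 * p ^ 8) := Nat.mul_le_mul_right _ (Nat.one_le_two_pow)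

/-! ### From the sixth-power bound to the real bound -/

lemma le_sixth_root {x D : ℕ} (h : x ^ 6 ≤ D) : (x : ℝ) ≤ (D : ℝ) ^ ((1 : ℝ) / 6) := by
  have hx : (0 : ℝ) ≤ (x : ℝ) := Nat.cast_nonneg x
  have h1 : ((x : ℝ) ^ (6 : ℕ)) ≤ (D : ℝ) := by
    push_cast
    exact_mod_cast Nat.cast_le.2 h
  have h2 : (x : ℝ) = ((x : ℝ) ^ (6 : ℕ)) ^ ((1 : ℝ) / 6) := by
    rw [← Real.rpow_natCast (x : ℝ) 6, ← Real.rpow_mul hx]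
    norm_num
  rw [h2]
  apply Real.rpow_le_rpow (by positivity) h1 (by norm_num)

lemma sixth_root_eval (m n p : ℕ) :
    ((2 ^ 84 * (m ^ 6 * n ^ 10 * p ^ 8) : ℕ) : ℝ) ^ ((1 : ℝ) / 6) =
      2 ^ 14 * (m : ℝ) * (n : ℝ) ^ ((5 : ℝ) / 3) * (p : ℝ) ^ ((4 : ℝ) / 3) := by
  have e1 : ((2 ^ 84 * (m ^ 6 * n ^ 10 * p ^ 8) : ℕ) : ℝ) =
      (2 : ℝ) ^ (84 : ℕ) * ((m : ℝ) ^ (6 : ℕ) * ((n : ℝ) ^ (10 : ℕ) * (p : ℝ) ^ (8 : ℕ))) := by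
    push_cast
    ring
  rw [e1]
  rw [Real.mul_rpow (by positivity) (by positivity),
      Real.mul_rpow (by positivity) (by positivity),
      Real.mul_rpow (by positivity) (by positivity)]
  have f : ∀ (x : ℝ), 0 ≤ x → ∀ (k : ℕ) (y : ℝ), (k : ℝ) * (1 / 6) = y →
      (x ^ (k : ℕ)) ^ ((1 : ℝ) / 6) = x ^ y := by
    intro x hx k y hy
    rw [← Real.rpow_natCast x k, ← Real.rpow_mul hx, hy]
  rw [f 2 (by norm_num) 84 (((14 : ℕ) : ℝ)) (by norm_num),
      f (m : ℝ) (Nat.cast_nonneg m) 6 1 (by norm_num),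
      f (n : ℝ) (Nat.cast_nonneg n) 10 ((5 : ℝ) / 3) (by norm_num),
      f (p : ℝ) (Nat.cast_nonneg p) 8 ((4 : ℝ) / 3) (by norm_num)]
  rw [Real.rpow_one, Real.rpow_natCast]
  norm_num
  ring

lemma log_factor_bound {x p : ℕ} (hxp : x ≤ p) :
    ((Nat.log 2 x : ℝ) + 1) ≤ 3 * Real.log (2 + (p : ℝ)) := by
  have hlog2 : (0.6931471803 : ℝ) < Real.log 2 := Real.log_two_gt_d9
  have hL2 : Real.log 2 ≤ Real.log (2 + (p : ℝ)) := by
    apply Real.log_le_log (by norm_num)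
    have : (0 : ℝ) ≤ (p : ℝ) := Nat.cast_nonneg p
    linarith
  have hL : (0.6931471803 : ℝ) < Real.log (2 + (p : ℝ)) := lt_of_lt_of_le hlog2 hL2
  rcases Nat.eq_zero_or_pos x with rfl | hx
  · simp only [Nat.log_zero_right, Nat.cast_zero, zero_add]
    linarith
  have h1 : (2 : ℕ) ^ (Nat.log 2 x) ≤ x := Nat.pow_log_le_self 2 (by omega)
  have h2 : ((2 : ℝ)) ^ (Nat.log 2 x : ℕ) ≤ 2 + (p : ℝ) := by
    have : ((2 ^ Nat.log 2 x : ℕ) : ℝ) ≤ (p : ℝ) := Nat.cast_le.2 (le_trans h1 hxp)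
    push_cast at this
    linarith
  have h3 : (Nat.log 2 x : ℝ) * Real.log 2 ≤ Real.log (2 + (p : ℝ)) := by
    calc (Nat.log 2 x : ℝ) * Real.log 2 = Real.log ((2 : ℝ) ^ (Nat.log 2 x : ℕ)) :=
          (Real.log_pow 2 (Nat.log 2 x)).symm
      _ ≤ Real.log (2 + (p : ℝ)) := Real.log_le_log (by positivity) h2
  nlinarith [Nat.cast_nonneg (α := ℝ) (Nat.log 2 x)]

/-! ### Per class bound packaged -/

lemma class_bound {A₁ A₂ A₃ : Finset ℝ} (h12 : A₁.card ≤ A₂.card) (h23 : A₂.card ≤ A₃.card)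
    (h i j : ℕ) :
    (8 * (2 ^ h * 2 ^ i * 2 ^ j) * (CL A₁ A₂ A₃ h i j).card) ^ 6 ≤
      2 ^ 84 * (A₁.card ^ 6 * A₂.card ^ 10 * A₃.card ^ 8) := by
  classical
  set m := A₁.card
  set n := A₂.card
  set p := A₃.card
  set F := CL A₁ A₂ A₃ h i j with hF
  set N := F.card with hN
  rcases Nat.eq_zero_or_pos N with hN0 | hNpos
  · have e : (8 * (2 ^ h * 2 ^ i * 2 ^ j) * N) ^ 6 = 0 := by rw [hN0]; ring
    rw [e]
    exact Nat.zero_le _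
  have hFLL : ∀ S ∈ F, S ∈ LL2 A₁ A₂ A₃ := fun S hS => (Finset.mem_filter.1 hS).1
  have hFsub : F ⊆ lines (UU A₁ A₂ A₃) := fun S hS =>
    (Finset.mem_filter.1 (hFLL S hS)).1
  have hFcl : ∀ S ∈ F,
      2 ^ h ≤ (S ∩ A₁ ×ˢ A₁).card ∧ (S ∩ A₁ ×ˢ A₁).card < 2 ^ (h + 1) ∧
      2 ^ i ≤ (S ∩ A₂ ×ˢ A₂).card ∧ (S ∩ A₂ ×ˢ A₂).card < 2 ^ (i + 1) ∧
      2 ^ j ≤ (S ∩ A₃ ×ˢ A₃).card ∧ (S ∩ A₃ ×ˢ A₃).card < 2 ^ (j + 1) := fun S hS =>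
    (Finset.mem_filter.1 hS).2
  have hwit : ∀ S ∈ F, ∃ z, z ∈ Tfin A₁ A₂ A₃ ∧ z.1 ∈ S ∧ z.2.1 ∈ S ∧ z.2.2 ∈ S := by
    intro S hS
    have h0 := (Finset.mem_filter.1 (hFLL S hS)).2.1
    obtain ⟨z, hz⟩ := Finset.card_pos.1 h0
    obtain ⟨hzT, h1, h2, h3⟩ := Finset.mem_filter.1 hz
    exact ⟨z, hzT, h1, h2, h3⟩
  -- j ≥ 1
  have hj1 : 1 ≤ j := by
    by_contra hj
    obtain ⟨S, hS⟩ := Finset.card_pos.1 hNpos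
    have hcl := hFcl S hS
    have h2le := (Finset.mem_filter.1 (hFLL S hS)).2.2
    have : j = 0 := by omega
    subst this
    simp only [pow_zero, zero_add, pow_one] at hcl
    omega
  have h2j : 2 ≤ 2 ^ j := by
    calc 2 = 2 ^ 1 := (pow_one 2).symm
      _ ≤ 2 ^ j := Nat.pow_le_pow_right (by omega) hj1
  -- ST bound on the third grid
  have hST3 : (2 ^ j) ^ 3 * N ≤ 2048 * p ^ 4 :=
    ST hFsub A₃ h2j (fun S hS => (hFcl S hS).2.2.2.2.1)
  by_cases hh : h = 0
  · by_cases hi : i = 0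
    · -- case 1 : cross bound
      have hcross : N ≤ m ^ 2 * n ^ 2 := by
        have hc := card_le_cross hFsub (A₁ ×ˢ A₁) (A₂ ×ˢ A₂) (by
          intro S hS
          obtain ⟨z, hzT, h1, h2, h3⟩ := hwit S hS
          obtain ⟨g1, g2, g3⟩ := mem_Tfin_gridmem hzT
          exact ⟨z.1, z.2.1, Finset.mem_inter.2 ⟨h1, g1⟩, Finset.mem_inter.2 ⟨h2, g2⟩,
            (Finset.mem_filter.1 hzT).2.1⟩)
        calc N ≤ (A₁ ×ˢ A₁).card * (A₂ ×ˢ A₂).card := hc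
          _ = m ^ 2 * n ^ 2 := by rw [Finset.card_product, Finset.card_product]; ring
      subst hh; subst hi
      exact arith1 hST3 hcross h12
    · -- case 2 : ST on grid 2 and pencil through grid-1 points
      have hi1 : 1 ≤ i := by omega
      have h2i : 2 ≤ 2 ^ i := by
        calc 2 = 2 ^ 1 := (pow_one 2).symm
          _ ≤ 2 ^ i := Nat.pow_le_pow_right (by omega) hi1
      have hST2 : (2 ^ i) ^ 3 * N ≤ 2048 * n ^ 4 :=
        ST hFsub A₂ h2i (fun S hS => (hFcl S hS).2.2.1)
      have hpen : (2 ^ i - 1) * N ≤ m ^ 2 * n ^ 2 := by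
        have hc := card_le_pencil hFsub (A₁ ×ˢ A₁) (A₂ ×ˢ A₂) (by
            intro S hS
            obtain ⟨z, hzT, h1, h2, h3⟩ := hwit S hS
            obtain ⟨g1, g2, g3⟩ := mem_Tfin_gridmem hzT
            exact ⟨z.1, Finset.mem_inter.2 ⟨h1, g1⟩⟩)
          (fun S hS => (hFcl S hS).2.2.1)
        calc (2 ^ i - 1) * N ≤ (A₁ ×ˢ A₁).card * (A₂ ×ˢ A₂).card := hc
          _ = m ^ 2 * n ^ 2 := by rw [Finset.card_product, Finset.card_product]; ring
      have hpen' : 2 ^ i * N ≤ 2 * (m ^ 2 * n ^ 2) := by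
        calc 2 ^ i * N ≤ (2 * (2 ^ i - 1)) * N := Nat.mul_le_mul_right _ (by omega)
          _ = 2 * ((2 ^ i - 1) * N) := by ring
          _ ≤ 2 * (m ^ 2 * n ^ 2) := Nat.mul_le_mul_left _ hpen
      subst hh
      exact arith2 hST2 hST3 hpen'
  · by_cases hi : i = 0
    · -- case 3 : ST on grid 1 and pencil through grid-2 points
      have hh1 : 1 ≤ h := by omega
      have h2h : 2 ≤ 2 ^ h := by
        calc 2 = 2 ^ 1 := (pow_one 2).symm
          _ ≤ 2 ^ h := Nat.pow_le_pow_right (by omega) hh1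
      have hST1 : (2 ^ h) ^ 3 * N ≤ 2048 * m ^ 4 :=
        ST hFsub A₁ h2h (fun S hS => (hFcl S hS).1)
      have hpen : (2 ^ h - 1) * N ≤ n ^ 2 * m ^ 2 := by
        have hc := card_le_pencil hFsub (A₂ ×ˢ A₂) (A₁ ×ˢ A₁) (by
            intro S hS
            obtain ⟨z, hzT, h1, h2, h3⟩ := hwit S hS
            obtain ⟨g1, g2, g3⟩ := mem_Tfin_gridmem hzT
            exact ⟨z.2.1, Finset.mem_inter.2 ⟨h2, g2⟩⟩)
          (fun S hS => (hFcl S hS).1)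
        calc (2 ^ h - 1) * N ≤ (A₂ ×ˢ A₂).card * (A₁ ×ˢ A₁).card := hc
          _ = n ^ 2 * m ^ 2 := by rw [Finset.card_product, Finset.card_product]; ring
      have hpen' : 2 ^ h * N ≤ 2 * (n ^ 2 * m ^ 2) := by
        calc 2 ^ h * N ≤ (2 * (2 ^ h - 1)) * N := Nat.mul_le_mul_right _ (by omega)
          _ = 2 * ((2 ^ h - 1) * N) := by ring
          _ ≤ 2 * (n ^ 2 * m ^ 2) := Nat.mul_le_mul_left _ hpen
      subst hi
      exact arith3 hST1 hST3 hpen' h12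
    · -- case 4 : ST on all three grids
      have hh1 : 1 ≤ h := by omega
      have hi1 : 1 ≤ i := by omega
      have h2h : 2 ≤ 2 ^ h := by
        calc 2 = 2 ^ 1 := (pow_one 2).symm
          _ ≤ 2 ^ h := Nat.pow_le_pow_right (by omega) hh1
      have h2i : 2 ≤ 2 ^ i := by
        calc 2 = 2 ^ 1 := (pow_one 2).symm
          _ ≤ 2 ^ i := Nat.pow_le_pow_right (by omega) hi1
      have hST1 : (2 ^ h) ^ 3 * N ≤ 2048 * m ^ 4 :=
        ST hFsub A₁ h2h (fun S hS => (hFcl S hS).1)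
      have hST2 : (2 ^ i) ^ 3 * N ≤ 2048 * n ^ 4 :=
        ST hFsub A₂ h2i (fun S hS => (hFcl S hS).2.2.1)
      exact arith4 hST1 hST2 hST3 h12

/-! ### The global counting bound -/

lemma global_nat_bound (A₁ A₂ A₃ : Finset ℝ) :
    (Tfin A₁ A₂ A₃).card ≤ A₁.card ^ 2 * A₂.card ^ 2 +
      ∑ t ∈ Finset.range (Nat.log 2 A₁.card + 1) ×ˢ
          (Finset.range (Nat.log 2 A₂.card + 1) ×ˢ Finset.range (Nat.log 2 A₃.card + 1)),
        8 * (2 ^ t.1 * 2 ^ t.2.1 * 2 ^ t.2.2) * (CL A₁ A₂ A₃ t.1 t.2.1 t.2.2).card := by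
  classical
  set m := A₁.card
  set n := A₂.card
  set p := A₃.card
  set U := UU A₁ A₂ A₃ with hU
  set Tf := Tfin A₁ A₂ A₃ with hTf
  set G1 := A₁ ×ˢ A₁ with hG1
  set G2 := A₂ ×ˢ A₂ with hG2
  set G3 := A₃ ×ˢ A₃ with hG3
  set LL := LL2 A₁ A₂ A₃ with hLL
  set R := Finset.range (Nat.log 2 m + 1) ×ˢ
      (Finset.range (Nat.log 2 n + 1) ×ˢ Finset.range (Nat.log 2 p + 1)) with hR
  set T1 := Tf.filter (fun z => (lineF U z.1 z.2.1 ∩ G3).card ≤ 1) with hT1def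
  set T2 := Tf.filter (fun z => ¬((lineF U z.1 z.2.1 ∩ G3).card ≤ 1)) with hT2def
  have hsplit : Tf.card = T1.card + T2.card :=
    (Finset.card_filter_add_card_filter_not _).symm
  -- bound on T1
  have hT1 : T1.card ≤ m ^ 2 * n ^ 2 := by
    have hinj : T1.card ≤ (G1 ×ˢ G2).card := by
      apply Finset.card_le_card_of_injOn (fun z => (z.1, z.2.1))
      · intro z hz
        obtain ⟨hzT, -⟩ := Finset.mem_filter.1 hz
        obtain ⟨g1, g2, -⟩ := mem_Tfin_gridmem hzT
        exact Finset.mem_product.2 ⟨g1, g2⟩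
      · intro z hz z' hz' he
        obtain ⟨hzT, hzs⟩ := Finset.mem_filter.1 (Finset.mem_coe.1 hz)
        obtain ⟨hzT', hzs'⟩ := Finset.mem_filter.1 (Finset.mem_coe.1 hz')
        have hee : (z.1, z.2.1) = (z'.1, z'.2.1) := he
        have he1 : z.1 = z'.1 := (Prod.ext_iff.1 hee).1
        have he2 : z.2.1 = z'.2.1 := (Prod.ext_iff.1 hee).2
        have hmem : z.2.2 ∈ lineF U z.1 z.2.1 ∩ G3 := by
          obtain ⟨-, htrip⟩ := triple_line hzT
          obtain ⟨-, -, -, h3⟩ := Finset.mem_filter.1 htrip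
          obtain ⟨-, -, g3⟩ := mem_Tfin_gridmem hzT
          exact Finset.mem_inter.2 ⟨h3, g3⟩
        have hmem' : z'.2.2 ∈ lineF U z.1 z.2.1 ∩ G3 := by
          obtain ⟨-, htrip⟩ := triple_line hzT'
          obtain ⟨-, -, -, h3⟩ := Finset.mem_filter.1 htrip
          obtain ⟨-, -, g3⟩ := mem_Tfin_gridmem hzT'
          rw [he1, he2]
          exact Finset.mem_inter.2 ⟨h3, g3⟩
        have h33 : z.2.2 = z'.2.2 := Finset.card_le_one.1 hzs _ hmem _ hmem'
        exact Prod.ext he1 (Prod.ext he2 h33)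
    calc T1.card ≤ (G1 ×ˢ G2).card := hinj
      _ = G1.card * G2.card := Finset.card_product _ _
      _ = m ^ 2 * n ^ 2 := by
          rw [hG1, hG2, Finset.card_product, Finset.card_product]
          ring
  -- T2 is covered by the classes
  have hT2 : T2.card ≤ ∑ S ∈ LL, (S ∩ G1).card * ((S ∩ G2).card * (S ∩ G3).card) := by
    have hsub : T2 ⊆ LL.biUnion (fun S => trip A₁ A₂ A₃ S) := by
      intro z hz
      obtain ⟨hzT, hzs⟩ := Finset.mem_filter.1 hz
      obtain ⟨hline, htrip⟩ := triple_line hzT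
      apply Finset.mem_biUnion.2
      refine ⟨lineF U z.1 z.2.1, ?_, htrip⟩
      apply Finset.mem_filter.2
      refine ⟨hline, Finset.card_pos.2 ⟨z, htrip⟩, by rw [← hG3]; omega⟩
    calc T2.card ≤ (LL.biUnion (fun S => trip A₁ A₂ A₃ S)).card := Finset.card_le_card hsub
      _ ≤ ∑ S ∈ LL, (trip A₁ A₂ A₃ S).card := Finset.card_biUnion_le
      _ ≤ ∑ S ∈ LL, (S ∩ G1).card * ((S ∩ G2).card * (S ∩ G3).card) := by
          apply Finset.sum_le_sum
          intro S hS
          have hsub2 : trip A₁ A₂ A₃ S ⊆ (S ∩ G1) ×ˢ ((S ∩ G2) ×ˢ (S ∩ G3)) := by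
            intro z hz
            obtain ⟨hzT, h1, h2, h3⟩ := Finset.mem_filter.1 hz
            obtain ⟨g1, g2, g3⟩ := mem_Tfin_gridmem hzT
            exact Finset.mem_product.2 ⟨Finset.mem_inter.2 ⟨h1, g1⟩,
              Finset.mem_product.2 ⟨Finset.mem_inter.2 ⟨h2, g2⟩, Finset.mem_inter.2 ⟨h3, g3⟩⟩⟩
          calc (trip A₁ A₂ A₃ S).card ≤ ((S ∩ G1) ×ˢ ((S ∩ G2) ×ˢ (S ∩ G3))).card :=
                Finset.card_le_card hsub2
            _ = (S ∩ G1).card * ((S ∩ G2).card * (S ∩ G3).card) := by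
                rw [Finset.card_product, Finset.card_product]
  -- cover LL by dyadic classes
  have hcover : LL ⊆ R.biUnion (fun t => CL A₁ A₂ A₃ t.1 t.2.1 t.2.2) := by
    intro S hS
    have hSl : S ∈ lines U := (Finset.mem_filter.1 hS).1
    have hmono := mono_of_mem_lines hSl
    have hle1 : (S ∩ G1).card ≤ m := by
      have := hmono.card_inter_grid A₁ A₁
      simpa [hG1] using this
    have hle2 : (S ∩ G2).card ≤ n := by
      have := hmono.card_inter_grid A₂ A₂
      simpa [hG2] using this
    have hle3 : (S ∩ G3).card ≤ p := by
      have := hmono.card_inter_grid A₃ A₃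
      simpa [hG3] using this
    have hpos : 0 < (S ∩ G1).card ∧ 0 < (S ∩ G2).card ∧ 0 < (S ∩ G3).card := by
      have h0 := (Finset.mem_filter.1 hS).2.1
      obtain ⟨z, hz⟩ := Finset.card_pos.1 h0
      obtain ⟨hzT, h1, h2, h3⟩ := Finset.mem_filter.1 hz
      obtain ⟨g1, g2, g3⟩ := mem_Tfin_gridmem hzT
      exact ⟨Finset.card_pos.2 ⟨z.1, Finset.mem_inter.2 ⟨h1, g1⟩⟩,
        Finset.card_pos.2 ⟨z.2.1, Finset.mem_inter.2 ⟨h2, g2⟩⟩,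
        Finset.card_pos.2 ⟨z.2.2, Finset.mem_inter.2 ⟨h3, g3⟩⟩⟩
    apply Finset.mem_biUnion.2
    refine ⟨(Nat.log 2 (S ∩ G1).card, Nat.log 2 (S ∩ G2).card, Nat.log 2 (S ∩ G3).card),
      ?_, ?_⟩
    · apply Finset.mem_product.2
      constructor
      · exact Finset.mem_range.2 (Nat.lt_succ_of_le (Nat.log_mono_right hle1 : Nat.log 2 (S ∩ G1).card ≤ Nat.log 2 m))
      apply Finset.mem_product.2
      constructor
      · exact Finset.mem_range.2 (Nat.lt_succ_of_le (Nat.log_mono_right hle2 : Nat.log 2 (S ∩ G2).card ≤ Nat.log 2 n))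
      · exact Finset.mem_range.2 (Nat.lt_succ_of_le (Nat.log_mono_right hle3 : Nat.log 2 (S ∩ G3).card ≤ Nat.log 2 p))
    · apply Finset.mem_filter.2
      refine ⟨hS, Nat.pow_log_le_self 2 (by omega), Nat.lt_pow_succ_log_self (by omega) _,
        Nat.pow_log_le_self 2 (by omega), Nat.lt_pow_succ_log_self (by omega) _,
        Nat.pow_log_le_self 2 (by omega), Nat.lt_pow_succ_log_self (by omega) _⟩
  -- put it together
  have hsum : ∑ S ∈ LL, (S ∩ G1).card * ((S ∩ G2).card * (S ∩ G3).card) ≤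
      ∑ t ∈ R, 8 * (2 ^ t.1 * 2 ^ t.2.1 * 2 ^ t.2.2) * (CL A₁ A₂ A₃ t.1 t.2.1 t.2.2).card := by
    calc ∑ S ∈ LL, (S ∩ G1).card * ((S ∩ G2).card * (S ∩ G3).card)
        ≤ ∑ S ∈ R.biUnion (fun t => CL A₁ A₂ A₃ t.1 t.2.1 t.2.2),
            (S ∩ G1).card * ((S ∩ G2).card * (S ∩ G3).card) := by
          apply Finset.sum_le_sum_of_subset hcover
      _ ≤ ∑ t ∈ R, ∑ S ∈ CL A₁ A₂ A₃ t.1 t.2.1 t.2.2,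
            (S ∩ G1).card * ((S ∩ G2).card * (S ∩ G3).card) := sum_biUnion_le_nat _
      _ ≤ ∑ t ∈ R, 8 * (2 ^ t.1 * 2 ^ t.2.1 * 2 ^ t.2.2) *
            (CL A₁ A₂ A₃ t.1 t.2.1 t.2.2).card := by
          apply Finset.sum_le_sum
          intro t ht
          have hbd : ∀ S ∈ CL A₁ A₂ A₃ t.1 t.2.1 t.2.2,
              (S ∩ G1).card * ((S ∩ G2).card * (S ∩ G3).card) ≤
                2 ^ (t.1 + 1) * (2 ^ (t.2.1 + 1) * 2 ^ (t.2.2 + 1)) := by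
            intro S hS
            obtain ⟨-, c1, c2, c3, c4, c5, c6⟩ := Finset.mem_filter.1 hS
            exact Nat.mul_le_mul (le_of_lt c2) (Nat.mul_le_mul (le_of_lt c4) (le_of_lt c6))
          calc ∑ S ∈ CL A₁ A₂ A₃ t.1 t.2.1 t.2.2,
                (S ∩ G1).card * ((S ∩ G2).card * (S ∩ G3).card)
              ≤ (CL A₁ A₂ A₃ t.1 t.2.1 t.2.2).card •
                  (2 ^ (t.1 + 1) * (2 ^ (t.2.1 + 1) * 2 ^ (t.2.2 + 1))) :=
                Finset.sum_le_card_nsmul _ _ _ hbd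
            _ = 8 * (2 ^ t.1 * 2 ^ t.2.1 * 2 ^ t.2.2) *
                  (CL A₁ A₂ A₃ t.1 t.2.1 t.2.2).card := by
                rw [smul_eq_mul, pow_succ, pow_succ, pow_succ]
                ring
  omega

end

end CT

theorem collinear_triples_asymmetric_bound :
    ∃ C c : ℝ, 0 < C ∧ 0 ≤ c ∧
      ∀ A₁ A₂ A₃ : Finset ℝ, A₁.card ≤ A₂.card → A₂.card ≤ A₃.card →
        (To A₁ A₂ A₃ : ℝ) ≤
          C * (A₁.card : ℝ) * (A₂.card : ℝ) ^ ((5 : ℝ) / 3) *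
            (A₃.card : ℝ) ^ ((4 : ℝ) / 3) * Real.log (2 + (A₃.card : ℝ)) ^ c := by
  classical
  refine ⟨884736, 3, by norm_num, by norm_num, ?_⟩
  intro A₁ A₂ A₃ h12 h23
  set m := A₁.card with hm
  set n := A₂.card with hn
  set p := A₃.card with hp
  set D : ℕ := 2 ^ 84 * (m ^ 6 * n ^ 10 * p ^ 8) with hD
  set B : ℝ := 2 ^ 14 * (m : ℝ) * (n : ℝ) ^ ((5 : ℝ) / 3) * (p : ℝ) ^ ((4 : ℝ) / 3) with hB
  set L : ℝ := Real.log (2 + (p : ℝ)) with hL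
  have hBnn : 0 ≤ B := by
    rw [hB]
    positivity
  have hLpos : (0.6931471803 : ℝ) < L := by
    rw [hL]
    have h2 : Real.log 2 ≤ Real.log (2 + (p : ℝ)) := by
      apply Real.log_le_log (by norm_num)
      have : (0 : ℝ) ≤ (p : ℝ) := Nat.cast_nonneg p
      linarith
    linarith [Real.log_two_gt_d9]
  have hLnn : 0 ≤ L := by linarith
  set R := Finset.range (Nat.log 2 m + 1) ×ˢ
      (Finset.range (Nat.log 2 n + 1) ×ˢ Finset.range (Nat.log 2 p + 1)) with hR
  -- the natural-number bound
  have hNat := CT.global_nat_bound A₁ A₂ A₃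
  -- each summand is at most B
  have hterm : ∀ t ∈ R, ((8 * (2 ^ t.1 * 2 ^ t.2.1 * 2 ^ t.2.2) *
      (CT.CL A₁ A₂ A₃ t.1 t.2.1 t.2.2).card : ℕ) : ℝ) ≤ B := by
    intro t ht
    have h6 := CT.class_bound h12 h23 t.1 t.2.1 t.2.2
    have := CT.le_sixth_root (D := D) h6
    rw [hD] at this
    calc ((8 * (2 ^ t.1 * 2 ^ t.2.1 * 2 ^ t.2.2) *
          (CT.CL A₁ A₂ A₃ t.1 t.2.1 t.2.2).card : ℕ) : ℝ)
        ≤ ((2 ^ 84 * (m ^ 6 * n ^ 10 * p ^ 8) : ℕ) : ℝ) ^ ((1 : ℝ) / 6) := this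
      _ = B := CT.sixth_root_eval m n p
  have hbase : ((m ^ 2 * n ^ 2 : ℕ) : ℝ) ≤ B := by
    have h6 := CT.arith_base h12 h23
    have := CT.le_sixth_root (D := D) (by rw [hD]; exact h6)
    rw [hD] at this
    calc ((m ^ 2 * n ^ 2 : ℕ) : ℝ) ≤ ((2 ^ 84 * (m ^ 6 * n ^ 10 * p ^ 8) : ℕ) : ℝ) ^ ((1 : ℝ) / 6) :=
          this
      _ = B := CT.sixth_root_eval m n p
  -- real-number assembly
  have hToTf : (To A₁ A₂ A₃ : ℝ) = ((CT.Tfin A₁ A₂ A₃).card : ℝ) := by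
    rw [CT.To_eq]
  have hsum : ((CT.Tfin A₁ A₂ A₃).card : ℝ) ≤ (1 + R.card : ℝ) * B := by
    have h1 : ((CT.Tfin A₁ A₂ A₃).card : ℝ) ≤ ((m ^ 2 * n ^ 2 : ℕ) : ℝ) +
        ∑ t ∈ R, ((8 * (2 ^ t.1 * 2 ^ t.2.1 * 2 ^ t.2.2) *
          (CT.CL A₁ A₂ A₃ t.1 t.2.1 t.2.2).card : ℕ) : ℝ) := by
      rw [← Nat.cast_sum]
      exact_mod_cast hNat
    have h2 : ∑ t ∈ R, ((8 * (2 ^ t.1 * 2 ^ t.2.1 * 2 ^ t.2.2) *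
        (CT.CL A₁ A₂ A₃ t.1 t.2.1 t.2.2).card : ℕ) : ℝ) ≤ (R.card : ℝ) * B := by
      calc ∑ t ∈ R, ((8 * (2 ^ t.1 * 2 ^ t.2.1 * 2 ^ t.2.2) *
            (CT.CL A₁ A₂ A₃ t.1 t.2.1 t.2.2).card : ℕ) : ℝ)
          ≤ ∑ _t ∈ R, B := Finset.sum_le_sum hterm
        _ = (R.card : ℝ) * B := by rw [Finset.sum_const, nsmul_eq_mul]
    calc ((CT.Tfin A₁ A₂ A₃).card : ℝ) ≤ ((m ^ 2 * n ^ 2 : ℕ) : ℝ) + ∑ t ∈ R, _ := h1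
      _ ≤ B + (R.card : ℝ) * B := add_le_add hbase h2
      _ = (1 + R.card : ℝ) * B := by ring
  -- bound the number of classes by the logarithm factor
  have hcard : (1 + R.card : ℝ) ≤ 54 * L ^ (3 : ℕ) := by
    have hRcard : R.card = (Nat.log 2 m + 1) * ((Nat.log 2 n + 1) * (Nat.log 2 p + 1)) := by
      rw [hR, Finset.card_product, Finset.card_product, Finset.card_range, Finset.card_range,
        Finset.card_range]
    have hf1 : ((Nat.log 2 m : ℝ) + 1) ≤ 3 * L := CT.log_factor_bound (le_trans h12 h23)
    have hf2 : ((Nat.log 2 n : ℝ) + 1) ≤ 3 * L := CT.log_factor_bound h23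
    have hf3 : ((Nat.log 2 p : ℝ) + 1) ≤ 3 * L := CT.log_factor_bound (le_refl p)
    have hpos1 : (1 : ℝ) ≤ (Nat.log 2 m : ℝ) + 1 := by
      have : (0 : ℝ) ≤ (Nat.log 2 m : ℝ) := Nat.cast_nonneg _
      linarith
    have hprod : (R.card : ℝ) = ((Nat.log 2 m : ℝ) + 1) * (((Nat.log 2 n : ℝ) + 1) *
        ((Nat.log 2 p : ℝ) + 1)) := by
      rw [hRcard]
      push_cast
      ring
    have hcast : (R.card : ℝ) ≤ 27 * L ^ (3 : ℕ) := by
      rw [hprod]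
      have n1 : (0 : ℝ) ≤ (Nat.log 2 m : ℝ) + 1 := by positivity
      have n2 : (0 : ℝ) ≤ (Nat.log 2 n : ℝ) + 1 := by positivity
      have n3 : (0 : ℝ) ≤ (Nat.log 2 p : ℝ) + 1 := by positivity
      calc ((Nat.log 2 m : ℝ) + 1) * (((Nat.log 2 n : ℝ) + 1) * ((Nat.log 2 p : ℝ) + 1))
          ≤ (3 * L) * ((3 * L) * (3 * L)) := by
            apply mul_le_mul hf1 ?_ (by positivity) (by positivity)
            apply mul_le_mul hf2 hf3 n3 (by positivity)
        _ = 27 * L ^ (3 : ℕ) := by ring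
    have hondef : (1 : ℝ) ≤ (R.card : ℝ) := by
      rw [hprod]
      have g1 : (1 : ℝ) ≤ (Nat.log 2 m : ℝ) + 1 := by
        have := Nat.cast_nonneg (α := ℝ) (Nat.log 2 m); linarith
      have g2 : (1 : ℝ) ≤ (Nat.log 2 n : ℝ) + 1 := by
        have := Nat.cast_nonneg (α := ℝ) (Nat.log 2 n); linarith
      have g3 : (1 : ℝ) ≤ (Nat.log 2 p : ℝ) + 1 := by
        have := Nat.cast_nonneg (α := ℝ) (Nat.log 2 p); linarith
      have g23 : (1 : ℝ) ≤ ((Nat.log 2 n : ℝ) + 1) * ((Nat.log 2 p : ℝ) + 1) := by nlinarith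
      nlinarith
    calc (1 + R.card : ℝ) ≤ (R.card : ℝ) + (R.card : ℝ) := by linarith
      _ = 2 * (R.card : ℝ) := by ring
      _ ≤ 2 * (27 * L ^ (3 : ℕ)) := by linarith
      _ = 54 * L ^ (3 : ℕ) := by ring
  -- final computation
  have hfinal : (To A₁ A₂ A₃ : ℝ) ≤ 54 * L ^ (3 : ℕ) * B := by
    rw [hToTf]
    calc ((CT.Tfin A₁ A₂ A₃).card : ℝ) ≤ (1 + R.card : ℝ) * B := hsum
      _ ≤ 54 * L ^ (3 : ℕ) * B := mul_le_mul_of_nonneg_right hcard hBnn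
  have hLpow : L ^ ((3 : ℝ)) = L ^ (3 : ℕ) := by
    rw [show ((3 : ℝ)) = ((3 : ℕ) : ℝ) by norm_num, Real.rpow_natCast]
  calc (To A₁ A₂ A₃ : ℝ) ≤ 54 * L ^ (3 : ℕ) * B := hfinal
    _ = 884736 * (m : ℝ) * (n : ℝ) ^ ((5 : ℝ) / 3) * (p : ℝ) ^ ((4 : ℝ) / 3) * L ^ (3 : ℕ) := by
        rw [hB]
        ring
    _ = 884736 * (m : ℝ) * (n : ℝ) ^ ((5 : ℝ) / 3) * (p : ℝ) ^ ((4 : ℝ) / 3) * L ^ ((3 : ℝ)) := by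
        rw [hLpow]
end

section
/- Let A be a finite subset of ℝ with 0 ∉ A. Then T°({0}, A, A) ≥ E^×(A) − |A|², where E^×(A) = #{(a₁,a₂,a₃,a₄) ∈ A⁴ : a₁a₂ = a₃a₄}. -/
open Finset

/-- Multiplicative energy: the number of quadruples `(a₁,a₂,a₃,a₄) ∈ A⁴` with `a₁a₂ = a₃a₄`. -/
noncomputable def Emul (A : Finset ℝ) : ℕ :=
  (((A ×ˢ A) ×ˢ (A ×ˢ A)).filter (fun p => p.1.1 * p.1.2 = p.2.1 * p.2.2)).card

theorem To_zero_lower_bound (A : Finset ℝ) (hA : (0 : ℝ) ∉ A) :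
    (Emul A : ℝ) - (A.card : ℝ) ^ 2 ≤ (To {0} A A : ℝ) := by
  classical
  set S := (((A ×ˢ A) ×ˢ (A ×ˢ A)).filter
    (fun p : (ℝ × ℝ) × (ℝ × ℝ) => p.1.1 * p.1.2 = p.2.1 * p.2.2)) with hSdef
  set good := S.filter (fun q => q.1 ≠ q.2) with hgood
  -- Step 1 : Emul A ≤ good.card + A.card ^ 2
  have hsplit : good.card + (S.filter (fun q => ¬ q.1 ≠ q.2)).card = S.card :=
    Finset.card_filter_add_card_filter_not _
  have hdiag : (S.filter (fun q => ¬ q.1 ≠ q.2)).card ≤ A.card ^ 2 := by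
    have : (S.filter (fun q => ¬ q.1 ≠ q.2)).card ≤ (A ×ˢ A).card := by
      apply Finset.card_le_card_of_injOn (fun q => q.1)
      · intro q hq
        simp only [Finset.mem_coe, Finset.mem_filter, hSdef] at hq
        exact (Finset.mem_product.mp hq.1.1).1
      · intro q hq r hr h
        simp only [Finset.mem_coe, Finset.mem_filter, not_not] at hq hr
        have h1 : q.1 = q.2 := hq.2
        have h2 : r.1 = r.2 := hr.2
        have h' : q.1 = r.1 := h
        exact Prod.ext h' (by rw [← h1, ← h2, h'])
    simpa [Finset.card_product, sq] using this
  have h1 : Emul A ≤ good.card + A.card ^ 2 := by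
    have : Emul A = S.card := rfl
    omega
  -- Step 2 : good.card ≤ To {0} A A
  set f : (ℝ × ℝ) × (ℝ × ℝ) → (ℝ × ℝ) × (ℝ × ℝ) × (ℝ × ℝ) :=
    fun q => (((0:ℝ), (0:ℝ)), (q.1.1, q.2.2), (q.2.1, q.1.2)) with hf
  have hfinj : Function.Injective f := by
    intro q r h
    simp only [hf, Prod.mk.injEq] at h
    exact Prod.ext (Prod.ext h.2.1.1 h.2.2.2) (Prod.ext h.2.2.1 h.2.1.2)
  set T : Set ((ℝ × ℝ) × (ℝ × ℝ) × (ℝ × ℝ)) :=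
    {p : (ℝ × ℝ) × (ℝ × ℝ) × (ℝ × ℝ) |
      p.1 ∈ (({0} : Finset ℝ) : Set ℝ) ×ˢ (({0} : Finset ℝ) : Set ℝ) ∧
      p.2.1 ∈ (A : Set ℝ) ×ˢ (A : Set ℝ) ∧
      p.2.2 ∈ (A : Set ℝ) ×ˢ (A : Set ℝ) ∧
      p.1 ≠ p.2.1 ∧ p.1 ≠ p.2.2 ∧ p.2.1 ≠ p.2.2 ∧
      Collinear ℝ {p.1, p.2.1, p.2.2}} with hT
  have hTfin : T.Finite := by
    apply Set.Finite.subset ((((({0} : Finset ℝ) ×ˢ ({0} : Finset ℝ)) ×ˢ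
      ((A ×ˢ A) ×ˢ (A ×ˢ A))) : Finset _) : Set _).toFinite
    intro p hp
    simp only [hT, Set.mem_setOf_eq] at hp
    simp only [Finset.coe_product, Set.mem_prod] at hp ⊢
    exact ⟨hp.1, hp.2.1, hp.2.2.1⟩
  have hsub : ↑(good.image f) ⊆ T := by
    intro p hp
    simp only [Finset.coe_image, Set.mem_image, Finset.mem_coe] at hp
    obtain ⟨q, hq, rfl⟩ := hp
    simp only [hgood, Finset.mem_filter, hSdef, Finset.mem_product] at hq
    obtain ⟨⟨⟨⟨ha1, ha2⟩, ha3, ha4⟩, heq⟩, hne⟩ := hq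
    have hq1 : q.1.1 ≠ 0 := fun h => hA (h ▸ ha1)
    have hq3 : q.2.1 ≠ 0 := fun h => hA (h ▸ ha3)
    refine ⟨?_, ?_, ?_, ?_, ?_, ?_, ?_⟩
    · simp [hf]
    · exact ⟨ha1, ha4⟩
    · exact ⟨ha3, ha2⟩
    · simp only [hf, ne_eq, Prod.mk.injEq, not_and]
      intro h; exact absurd h.symm hq1
    · simp only [hf, ne_eq, Prod.mk.injEq, not_and]
      intro h; exact absurd h.symm hq3
    · simp only [hf, ne_eq, Prod.mk.injEq, not_and]
      intro h13 h42
      apply hne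
      have h24 : q.1.2 = q.2.2 := mul_left_cancel₀ hq1 (by rw [heq, ← h13])
      exact Prod.ext h13 h24
    · rw [collinear_iff_exists_forall_eq_smul_vadd]
      refine ⟨((0:ℝ),(0:ℝ)), (q.1.1, q.2.2), ?_⟩
      intro p hp
      simp only [Set.mem_insert_iff, Set.mem_singleton_iff, hf] at hp
      rcases hp with rfl | rfl | rfl
      · exact ⟨0, by simp⟩
      · exact ⟨1, by simp⟩
      · refine ⟨q.2.1 / q.1.1, ?_⟩
        have : (q.2.1 / q.1.1) * q.2.2 = q.1.2 := by
          field_simp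
          linarith [heq]
        simp [Prod.ext_iff, smul_eq_mul]
        constructor
        · field_simp
        · linarith [this]
  have h2 : good.card ≤ To {0} A A := by
    have hcard : (good.image f).card = good.card :=
      Finset.card_image_of_injective _ hfinj
    have : ((good.image f : Finset _) : Set _).ncard ≤ T.ncard :=
      Set.ncard_le_ncard hsub hTfin
    rw [Set.ncard_coe_finset, hcard] at this
    exact this
  -- combine
  have := h1
  have hq2 : (Emul A : ℝ) ≤ (good.card : ℝ) + (A.card : ℝ) ^ 2 := by
    exact_mod_cast h1
  have hq3 : (good.card : ℝ) ≤ (To {0} A A : ℝ) := by exact_mod_cast h2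
  linarith
end

section
/- Let A₁, A₂, A₃ be finite subsets of ℝ with |A₁| ≤ |A₂| ≤ |A₃|. Let ℒ be the set of lines l in ℝ² such that l contains three pairwise distinct points u₁, u₂, u₃ with uᵢ ∈ Aᵢ × Aᵢ (i = 1,2,3), and for l ∈ ℒ and i = 1,2,3 set α_{i,l} = |l ∩ (Aᵢ × Aᵢ)|. Then for each i ∈ {1,2,3} and each real p with 1 ≤ p ≤ 3, there exist absolute constants C > 0 and c ≥ 0 such that ∑_{l ∈ ℒ, α_{i,l} ≥ 2} α_{i,l}^p ≤ C·|A₁|^{3−p}·|Aᵢ|^{p+1}·(log(2+|A₃|))^c. -/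
open Finset

/-- A line in the plane: the affine span of two distinct points. -/
def IsLine (l : Set (ℝ × ℝ)) : Prop :=
  ∃ u v : ℝ × ℝ, u ≠ v ∧ l = (affineSpan ℝ {u, v} : Set (ℝ × ℝ))

/-- The family `ℒ` of lines containing three pairwise distinct points `u₁, u₂, u₃`
with `uᵢ ∈ Aᵢ × Aᵢ` for `i = 1, 2, 3`. -/
def lineFamily (A₁ A₂ A₃ : Finset ℝ) : Set (Set (ℝ × ℝ)) :=
  {l | IsLine l ∧ ∃ u₁ u₂ u₃ : ℝ × ℝ,
    u₁ ∈ (A₁ : Set ℝ) ×ˢ (A₁ : Set ℝ) ∧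
    u₂ ∈ (A₂ : Set ℝ) ×ˢ (A₂ : Set ℝ) ∧
    u₃ ∈ (A₃ : Set ℝ) ×ˢ (A₃ : Set ℝ) ∧
    u₁ ≠ u₂ ∧ u₁ ≠ u₃ ∧ u₂ ≠ u₃ ∧ u₁ ∈ l ∧ u₂ ∈ l ∧ u₃ ∈ l}

/-- `alphaCnt A l = |l ∩ (A × A)|`. -/
noncomputable def alphaCnt (A : Finset ℝ) (l : Set (ℝ × ℝ)) : ℕ :=
  (l ∩ (A : Set ℝ) ×ˢ (A : Set ℝ)).ncard


noncomputable def lineThru (u v : ℝ × ℝ) : Set (ℝ × ℝ) :=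
  (affineSpan ℝ {u, v} : Set (ℝ × ℝ))

lemma mem_line_iff {a b p : ℝ × ℝ} : p ∈ lineThru a b ↔ ∃ t : ℝ, p = a + t • (b - a) := by
  have h := @vadd_left_mem_affineSpan_pair ℝ _ _ _ _ _ _ a b (p - a)
  simp only [vadd_eq_add, vsub_eq_sub, sub_add_cancel] at h
  constructor
  · intro hp
    obtain ⟨r, hr⟩ := h.1 hp
    exact ⟨r, by rw [hr]; ring⟩
  · rintro ⟨t, rfl⟩
    apply h.2
    exact ⟨t, by ring⟩

lemma mem_lineThru_left (a b : ℝ × ℝ) : a ∈ lineThru a b :=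
  mem_line_iff.2 ⟨0, by simp⟩

lemma mem_lineThru_right (a b : ℝ × ℝ) : b ∈ lineThru a b :=
  mem_line_iff.2 ⟨1, by simp⟩

lemma isLine_lineThru {a b : ℝ × ℝ} (h : a ≠ b) : IsLine (lineThru a b) := ⟨a, b, h, rfl⟩

lemma eq_lineThru {l : Set (ℝ × ℝ)} (hl : IsLine l) {u v : ℝ × ℝ} (huv : u ≠ v)
    (hu : u ∈ l) (hv : v ∈ l) : l = lineThru u v := by
  obtain ⟨a, b, hab, rfl⟩ := hl
  change u ∈ lineThru a b at hu
  change v ∈ lineThru a b at hv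
  obtain ⟨s, rfl⟩ := mem_line_iff.1 hu
  obtain ⟨t, rfl⟩ := mem_line_iff.1 hv
  have hst : s ≠ t := by
    intro h; apply huv; rw [h]
  have hd : (a + t • (b - a)) - (a + s • (b - a)) = (t - s) • (b - a) := by
    rw [sub_smul]; abel
  have hts : t - s ≠ 0 := sub_ne_zero.2 hst.symm
  apply le_antisymm
  · intro x hx
    change x ∈ lineThru a b at hx
    obtain ⟨r, rfl⟩ := mem_line_iff.1 hx
    rw [mem_line_iff]
    refine ⟨(r - s) / (t - s), ?_⟩
    rw [hd, smul_smul]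
    have : (r - s) / (t - s) * (t - s) = r - s := by field_simp
    rw [this, sub_smul]
    abel
  · intro x hx
    obtain ⟨r, rfl⟩ := mem_line_iff.1 hx
    show _ ∈ lineThru a b
    rw [mem_line_iff]
    refine ⟨s + r * (t - s), ?_⟩
    rw [hd, smul_smul, add_smul, mul_smul]
    abel

lemma line_unique {l m : Set (ℝ × ℝ)} (hl : IsLine l) (hm : IsLine m) {u v : ℝ × ℝ}
    (huv : u ≠ v) (hul : u ∈ l) (hvl : v ∈ l) (hum : u ∈ m) (hvm : v ∈ m) : l = m := by
  rw [eq_lineThru hl huv hul hvl, eq_lineThru hm huv hum hvm]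

lemma line_cases {l : Set (ℝ × ℝ)} (hl : IsLine l) :
    (∀ p ∈ l, ∀ q ∈ l, p.1 = q.1) ∨ ∃ m c : ℝ, ∀ p ∈ l, p.2 = m * p.1 + c := by
  obtain ⟨a, b, hab, rfl⟩ := hl
  by_cases h1 : a.1 = b.1
  · left
    intro p hp q hq
    obtain ⟨s, rfl⟩ := mem_line_iff.1 hp
    obtain ⟨t, rfl⟩ := mem_line_iff.1 hq
    simp [Prod.fst_add, Prod.smul_fst, ← h1]
  · right
    refine ⟨(b.2 - a.2) / (b.1 - a.1), a.2 - (b.2 - a.2) / (b.1 - a.1) * a.1, ?_⟩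
    intro p hp
    obtain ⟨t, rfl⟩ := mem_line_iff.1 hp
    have hba : b.1 - a.1 ≠ 0 := sub_ne_zero.2 fun h => h1 h.symm
    simp only [Prod.snd_add, Prod.smul_snd, Prod.fst_add, Prod.smul_fst, Prod.fst_sub,
      Prod.snd_sub, smul_eq_mul]
    field_simp
    ring

open scoped Classical

noncomputable def cnt (P : Finset (ℝ × ℝ)) (l : Set (ℝ × ℝ)) : ℕ :=
  (P.filter (· ∈ l)).card

lemma cnt_le_card (P : Finset (ℝ × ℝ)) (l : Set (ℝ × ℝ)) : cnt P l ≤ P.card :=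
  Finset.card_le_card (Finset.filter_subset _ _)

lemma cnt_mono {P Q : Finset (ℝ × ℝ)} (h : P ⊆ Q) (l : Set (ℝ × ℝ)) : cnt P l ≤ cnt Q l :=
  Finset.card_le_card (Finset.filter_subset_filter _ h)

noncomputable def linesOf (G : Finset (ℝ × ℝ)) : Finset (Set (ℝ × ℝ)) :=
  G.offDiag.image (fun pq => lineThru pq.1 pq.2)

lemma isLine_of_mem_linesOf {G : Finset (ℝ × ℝ)} {l : Set (ℝ × ℝ)} (h : l ∈ linesOf G) :
    IsLine l := by
  simp only [linesOf, Finset.mem_image, Finset.mem_offDiag] at h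
  obtain ⟨⟨u, v⟩, ⟨_, _, huv⟩, rfl⟩ := h
  exact isLine_lineThru huv

lemma mem_linesOf {G : Finset (ℝ × ℝ)} {l : Set (ℝ × ℝ)} (hl : IsLine l) {u v : ℝ × ℝ}
    (hu : u ∈ G) (hv : v ∈ G) (huv : u ≠ v) (hul : u ∈ l) (hvl : v ∈ l) : l ∈ linesOf G := by
  simp only [linesOf, Finset.mem_image]
  exact ⟨(u, v), Finset.mem_offDiag.2 ⟨hu, hv, huv⟩, (eq_lineThru hl huv hul hvl).symm⟩

/-- each line with ≥ 2 points of G is in linesOf G -/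
lemma mem_linesOf_of_two {G : Finset (ℝ × ℝ)} {l : Set (ℝ × ℝ)} (hl : IsLine l)
    (h2 : 2 ≤ cnt G l) : l ∈ linesOf G := by
  classical
  obtain ⟨u, hu, v, hv, huv⟩ := Finset.one_lt_card.1 h2
  simp only [Finset.mem_filter] at hu hv
  exact mem_linesOf hl hu.1 hv.1 huv hu.2 hv.2

/-- Key double counting: sum over distinct lines of (#pts choose ordered pairs) is at most
the number of ordered pairs of distinct points. -/
lemma sum_pairs_le (Λ : Finset (Set (ℝ × ℝ))) (hΛ : ∀ l ∈ Λ, IsLine l) (P : Finset (ℝ × ℝ)) :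
    ∑ l ∈ Λ, cnt P l * (cnt P l - 1) ≤ P.card * (P.card - 1) := by
  classical
  have hcard : ∀ l, cnt P l * (cnt P l - 1) = ((P.filter (· ∈ l)).offDiag).card := by
    intro l
    rw [Finset.offDiag_card]
    cases h : cnt P l with
    | zero => unfold cnt at h; simp [h]
    | succ m => unfold cnt at h; rw [h]; simp [Nat.succ_sub_one]; ring_nf; omega
  calc ∑ l ∈ Λ, cnt P l * (cnt P l - 1)
      = ∑ l ∈ Λ, ((P.filter (· ∈ l)).offDiag).card := by
        exact Finset.sum_congr rfl (fun l _ => hcard l)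
    _ = (Λ.biUnion (fun l => (P.filter (· ∈ l)).offDiag)).card := by
        rw [Finset.card_biUnion]
        intro l hl m hm hlm
        simp only [Finset.disjoint_left]
        intro ⟨u, v⟩ hu hv
        simp only [Finset.mem_offDiag, Finset.mem_filter] at hu hv
        exact hlm (line_unique (hΛ l hl) (hΛ m hm) hu.2.2 hu.1.2 hu.2.1.2 hv.1.2 hv.2.1.2)
    _ ≤ (P.offDiag).card := by
        apply Finset.card_le_card
        intro x hx
        simp only [Finset.mem_biUnion, Finset.mem_offDiag, Finset.mem_filter] at hx ⊢
        obtain ⟨l, _, h1, h2, h3⟩ := hx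
        exact ⟨h1.1, h2.1, h3⟩
    _ = P.card * (P.card - 1) := by
        rw [Finset.offDiag_card]
        cases h : P.card with
        | zero => simp
        | succ m => simp [Nat.succ_sub_one]; ring_nf; omega

/-- consequence: second-moment bound with threshold 2. -/
lemma sum_sq_le (Λ : Finset (Set (ℝ × ℝ))) (hΛ : ∀ l ∈ Λ, IsLine l) (P : Finset (ℝ × ℝ)) :
    ∑ l ∈ Λ.filter (fun l => 2 ≤ cnt P l), (cnt P l) ^ 2 ≤ 2 * (P.card * (P.card - 1)) := by
  classical
  have h1 : ∑ l ∈ Λ.filter (fun l => 2 ≤ cnt P l), (cnt P l) ^ 2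
      ≤ ∑ l ∈ Λ.filter (fun l => 2 ≤ cnt P l), 2 * (cnt P l * (cnt P l - 1)) := by
    apply Finset.sum_le_sum
    intro l hl
    have h2 := (Finset.mem_filter.1 hl).2
    have : cnt P l ≤ 2 * (cnt P l - 1) := by omega
    calc (cnt P l) ^ 2 = cnt P l * cnt P l := sq (cnt P l) ▸ by ring
      _ ≤ cnt P l * (2 * (cnt P l - 1)) := Nat.mul_le_mul_left _ this
      _ = 2 * (cnt P l * (cnt P l - 1)) := by ring
  refine h1.trans ?_
  rw [← Finset.mul_sum]
  have h3 : ∑ l ∈ Λ.filter (fun l => 2 ≤ cnt P l), cnt P l * (cnt P l - 1)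
      ≤ P.card * (P.card - 1) := by
    refine le_trans ?_ (sum_pairs_le Λ hΛ P)
    exact Finset.sum_le_sum_of_subset (Finset.filter_subset _ _)
  exact Nat.mul_le_mul_left _ h3

/-- Pencil bound: lines through a common point. -/
lemma pencil_bound (Λ : Finset (Set (ℝ × ℝ))) (hΛ : ∀ l ∈ Λ, IsLine l) (q : ℝ × ℝ)
    (hq : ∀ l ∈ Λ, q ∈ l) (P : Finset (ℝ × ℝ)) :
    ∑ l ∈ Λ, (cnt P l - 1) ≤ P.card := by
  classical
  have hcard : ∀ l, cnt P l - 1 ≤ ((P.filter (· ∈ l)).erase q).card := by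
    intro l
    have := Finset.pred_card_le_card_erase (s := P.filter (· ∈ l)) (a := q)
    have h2 : ((P.filter (· ∈ l)).erase q).card ≥ (P.filter (· ∈ l)).card - 1 := by
      rcases Finset.decidableMem q (P.filter (· ∈ l)) with h | h
      · rw [Finset.erase_eq_of_notMem h]; omega
      · rw [Finset.card_erase_of_mem h]
    exact h2
  calc ∑ l ∈ Λ, (cnt P l - 1) ≤ ∑ l ∈ Λ, ((P.filter (· ∈ l)).erase q).card :=
        Finset.sum_le_sum (fun l _ => hcard l)
    _ = (Λ.biUnion (fun l => (P.filter (· ∈ l)).erase q)).card := by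
        rw [Finset.card_biUnion]
        intro l hl m hm hlm
        simp only [Finset.disjoint_left]
        intro u hu hv
        simp only [Finset.mem_erase, Finset.mem_filter] at hu hv
        exact hlm (line_unique (hΛ l hl) (hΛ m hm) hu.1 hu.2.2 (hq l hl) hv.2.2 (hq m hm))
    _ ≤ P.card := by
        apply Finset.card_le_card
        intro x hx
        simp only [Finset.mem_biUnion, Finset.mem_erase, Finset.mem_filter] at hx
        obtain ⟨l, _, _, h2, _⟩ := hx
        exact h2

noncomputable def rnk (A : Finset ℝ) (x : ℝ) : ℕ := (A.filter (fun a => a < x)).card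

noncomputable def idx (s : ℕ) (A : Finset ℝ) (x : ℝ) : ℕ := rnk A x / s

lemma rnk_mono (A : Finset ℝ) {x y : ℝ} (h : x ≤ y) : rnk A x ≤ rnk A y := by
  apply Finset.card_le_card
  intro a ha
  simp only [Finset.mem_filter] at *
  exact ⟨ha.1, lt_of_lt_of_le ha.2 h⟩

lemma rnk_strict (A : Finset ℝ) {a b : ℝ} (ha : a ∈ A) (hab : a < b) :
    rnk A a < rnk A b := by
  apply Finset.card_lt_card
  constructor
  · intro x hx
    simp only [Finset.mem_filter] at *
    exact ⟨hx.1, hx.2.trans hab⟩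
  · intro hsub
    have : a ∈ A.filter (fun t => t < b) := Finset.mem_filter.2 ⟨ha, hab⟩
    have := hsub this
    simp only [Finset.mem_filter] at this
    exact lt_irrefl a this.2

lemma rnk_lt_card (A : Finset ℝ) {a : ℝ} (ha : a ∈ A) : rnk A a < A.card := by
  apply Finset.card_lt_card
  constructor
  · exact Finset.filter_subset _ _
  · intro hsub
    have := hsub ha
    simp only [Finset.mem_filter] at this
    exact lt_irrefl a this.2

lemma idx_mono (s : ℕ) (A : Finset ℝ) {x y : ℝ} (h : x ≤ y) : idx s A x ≤ idx s A y :=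
  Nat.div_le_div_right (rnk_mono A h)

lemma idx_lt (s r : ℕ) (A : Finset ℝ) (hs : 0 < s) (hcard : A.card ≤ s * r) {a : ℝ}
    (ha : a ∈ A) : idx s A a < r := by
  have h1 : rnk A a < s * r := lt_of_lt_of_le (rnk_lt_card A ha) hcard
  exact Nat.div_lt_of_lt_mul h1

lemma fiber_card (s : ℕ) (hs : 0 < s) (A : Finset ℝ) (i : ℕ) :
    (A.filter (fun a => idx s A a = i)).card ≤ s := by
  classical
  have : (A.filter (fun a => idx s A a = i)).card ≤ (Finset.Ico (i * s) (i * s + s)).card := by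
    apply Finset.card_le_card_of_injOn (fun a => rnk A a)
    · intro a ha
      simp only [Finset.coe_filter, Finset.mem_coe, Finset.mem_filter, Set.mem_setOf_eq] at ha ⊢
      have h1 : rnk A a / s = i := ha.2
      simp only [Finset.mem_Ico]
      constructor
      · rw [← h1]
        exact Nat.div_mul_le_self _ _
      · have h2 : rnk A a < (i + 1) * s :=
          (Nat.div_lt_iff_lt_mul hs).1 (by rw [h1]; exact Nat.lt_succ_self i)
        rw [add_mul, one_mul] at h2
        exact h2
    · intro a ha b hb hab
      simp only [Finset.coe_filter, Set.mem_setOf_eq] at ha hb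
      by_contra hne
      rcases lt_or_gt_of_ne hne with h | h
      · exact absurd hab (Nat.ne_of_lt (rnk_strict A ha.1 h))
      · exact absurd hab.symm (Nat.ne_of_lt (rnk_strict A hb.1 h))
  simpa using this

lemma chain_card {S : Finset (ℕ × ℕ)} {rA rB : ℕ}
    (hb : ∀ c ∈ S, c.1 < rA ∧ c.2 < rB)
    (hc : ∀ c ∈ S, ∀ d ∈ S, (c.1 ≤ d.1 ∧ c.2 ≤ d.2) ∨ (d.1 ≤ c.1 ∧ d.2 ≤ c.2)) :
    S.card ≤ rA + rB := by
  classical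
  have : S.card ≤ (Finset.range (rA + rB)).card := by
    apply Finset.card_le_card_of_injOn (fun c => c.1 + c.2)
    · intro c hcS
      have := hb c hcS
      simp only [Finset.mem_coe, Finset.mem_range]
      omega
    · intro c hcS d hdS h
      simp only [Finset.mem_coe] at hcS hdS
      have h' : c.1 + c.2 = d.1 + d.2 := h
      have := hc c hcS d hdS
      have : c.1 = d.1 ∧ c.2 = d.2 := by omega
      exact Prod.ext this.1 this.2
  simpa using this

lemma antichain_card {S : Finset (ℕ × ℕ)} {rA rB : ℕ}
    (hb : ∀ c ∈ S, c.1 < rA ∧ c.2 < rB)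
    (hc : ∀ c ∈ S, ∀ d ∈ S, (c.1 ≤ d.1 ∧ d.2 ≤ c.2) ∨ (d.1 ≤ c.1 ∧ c.2 ≤ d.2)) :
    S.card ≤ rA + rB := by
  classical
  have : S.card ≤ (Finset.range (rA + rB)).card := by
    apply Finset.card_le_card_of_injOn (fun c => c.1 + (rB - 1 - c.2))
    · intro c hcS
      have := hb c hcS
      simp only [Finset.mem_coe, Finset.mem_range]
      omega
    · intro c hcS d hdS h
      simp only [Finset.mem_coe] at hcS hdS
      have h' : c.1 + (rB - 1 - c.2) = d.1 + (rB - 1 - d.2) := h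
      have h1 := hc c hcS d hdS
      have h2 := hb c hcS
      have h3 := hb d hdS
      have : c.1 = d.1 ∧ c.2 = d.2 := by omega
      exact Prod.ext this.1 this.2
  simpa using this

noncomputable def cellIdx (sA sB : ℕ) (A B : Finset ℝ) (p : ℝ × ℝ) : ℕ × ℕ :=
  (idx sA A p.1, idx sB B p.2)

lemma cellsMet_le {l : Set (ℝ × ℝ)} (hl : IsLine l) (A B : Finset ℝ) (sA sB rA rB : ℕ)
    (hsA : 0 < sA) (hsB : 0 < sB) (hcA : A.card ≤ sA * rA) (hcB : B.card ≤ sB * rB) :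
    (((A ×ˢ B).filter (· ∈ l)).image (cellIdx sA sB A B)).card ≤ rA + rB := by
  classical
  set F := (A ×ˢ B).filter (· ∈ l) with hF
  have hbnd : ∀ c ∈ F.image (cellIdx sA sB A B), c.1 < rA ∧ c.2 < rB := by
    intro c hcmem
    obtain ⟨p, hp, rfl⟩ := Finset.mem_image.1 hcmem
    simp only [hF, Finset.mem_filter, Finset.mem_product] at hp
    exact ⟨idx_lt sA rA A hsA hcA hp.1.1, idx_lt sB rB B hsB hcB hp.1.2⟩
  rcases line_cases hl with hvert | ⟨m, cc, hgraph⟩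
  · -- vertical
    have : ∀ c ∈ F.image (cellIdx sA sB A B), ∀ d ∈ F.image (cellIdx sA sB A B),
        (c.1 ≤ d.1 ∧ c.2 ≤ d.2) ∨ (d.1 ≤ c.1 ∧ d.2 ≤ c.2) := by
      intro c hcm d hdm
      obtain ⟨p, hp, rfl⟩ := Finset.mem_image.1 hcm
      obtain ⟨q, hq, rfl⟩ := Finset.mem_image.1 hdm
      simp only [hF, Finset.mem_filter] at hp hq
      have hx : p.1 = q.1 := hvert p hp.2 q hq.2
      have h1 : idx sA A p.1 = idx sA A q.1 := by rw [hx]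
      rcases le_total p.2 q.2 with h | h
      · exact Or.inl ⟨le_of_eq h1, idx_mono _ _ h⟩
      · exact Or.inr ⟨le_of_eq h1.symm, idx_mono _ _ h⟩
    exact chain_card hbnd this
  · rcases le_or_gt 0 m with hm | hm
    · -- nonneg slope: chain
      have : ∀ c ∈ F.image (cellIdx sA sB A B), ∀ d ∈ F.image (cellIdx sA sB A B),
          (c.1 ≤ d.1 ∧ c.2 ≤ d.2) ∨ (d.1 ≤ c.1 ∧ d.2 ≤ c.2) := by
        intro c hcm d hdm
        obtain ⟨p, hp, rfl⟩ := Finset.mem_image.1 hcm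
        obtain ⟨q, hq, rfl⟩ := Finset.mem_image.1 hdm
        simp only [hF, Finset.mem_filter] at hp hq
        have hp2 := hgraph p hp.2
        have hq2 := hgraph q hq.2
        rcases le_total p.1 q.1 with h | h
        · refine Or.inl ⟨idx_mono _ _ h, idx_mono _ _ ?_⟩
          rw [hp2, hq2]
          have := mul_le_mul_of_nonneg_left h hm
          linarith
        · refine Or.inr ⟨idx_mono _ _ h, idx_mono _ _ ?_⟩
          rw [hp2, hq2]
          have := mul_le_mul_of_nonneg_left h hm
          linarith
      exact chain_card hbnd this
    · -- negative slope: antichain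
      have : ∀ c ∈ F.image (cellIdx sA sB A B), ∀ d ∈ F.image (cellIdx sA sB A B),
          (c.1 ≤ d.1 ∧ d.2 ≤ c.2) ∨ (d.1 ≤ c.1 ∧ c.2 ≤ d.2) := by
        intro c hcm d hdm
        obtain ⟨p, hp, rfl⟩ := Finset.mem_image.1 hcm
        obtain ⟨q, hq, rfl⟩ := Finset.mem_image.1 hdm
        simp only [hF, Finset.mem_filter] at hp hq
        have hp2 := hgraph p hp.2
        have hq2 := hgraph q hq.2
        rcases le_total p.1 q.1 with h | h
        · refine Or.inl ⟨idx_mono _ _ h, idx_mono _ _ ?_⟩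
          rw [hp2, hq2]
          nlinarith
        · refine Or.inr ⟨idx_mono _ _ h, idx_mono _ _ ?_⟩
          rw [hp2, hq2]
          nlinarith
      exact antichain_card hbnd this

lemma mul_pred_mono {a b : ℕ} (h : a ≤ b) : a * (a - 1) ≤ b * (b - 1) :=
  Nat.mul_le_mul h (by omega)

lemma one_step (A B : Finset ℝ) (k sA sB rA rB : ℕ) (hsA : 0 < sA) (hsB : 0 < sB)
    (hcA : A.card ≤ sA * rA) (hcB : B.card ≤ sB * rB) (hk2 : 2 ≤ k)
    (hkR : 2 * (rA + rB) ≤ k) :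
    ∑ l ∈ (linesOf (A ×ˢ B)).filter (fun l => k ≤ cnt (A ×ˢ B) l), (cnt (A ×ˢ B) l) ^ 2
      ≤ 4 * (rA + rB) * (rA * rB) * ((sA * sB) * (sA * sB - 1)) := by
  classical
  set G := A ×ˢ B with hG
  set Lk := (linesOf G).filter (fun l => k ≤ cnt G l) with hLk
  set φ := cellIdx sA sB A B with hφ
  set cells := Finset.range rA ×ˢ Finset.range rB with hcells
  set y : ℕ × ℕ → Set (ℝ × ℝ) → ℕ :=
    fun c l => ((G.filter (· ∈ l)).filter (fun p => φ p = c)).card with hy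
  set S := ∑ l ∈ Lk, (cnt G l) ^ 2 with hS
  set R := rA + rB with hR
  have hmemcells : ∀ l : Set (ℝ × ℝ), ∀ x ∈ G.filter (· ∈ l), φ x ∈ cells := by
    intro l x hx
    simp only [hG, Finset.mem_filter, Finset.mem_product] at hx
    simp only [hcells, Finset.mem_product, Finset.mem_range]
    exact ⟨idx_lt sA rA A hsA hcA hx.1.1, idx_lt sB rB B hsB hcB hx.1.2⟩
  -- decomposition of cnt into cell counts
  have hdecomp : ∀ l : Set (ℝ × ℝ), cnt G l = ∑ c ∈ cells, y c l := by
    intro l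
    exact Finset.card_eq_sum_card_fiberwise (hmemcells l)
  -- Step 1 : CS
  have hstep1 : ∀ l ∈ Lk, (cnt G l) ^ 2 ≤ R * ∑ c ∈ cells, (y c l) ^ 2 := by
    intro l hl
    have hlL : l ∈ linesOf G := (Finset.mem_filter.1 hl).1
    have hline : IsLine l := isLine_of_mem_linesOf hlL
    set M := (G.filter (· ∈ l)).image φ with hM
    have hMsub : M ⊆ cells := by
      intro c hc
      obtain ⟨p, hp, rfl⟩ := Finset.mem_image.1 hc
      exact hmemcells l p hp
    have h1 : cnt G l = ∑ c ∈ M, y c l :=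
      Finset.card_eq_sum_card_fiberwise (fun x hx => Finset.mem_image_of_mem φ hx)
    have h2 : (∑ c ∈ M, y c l) ^ 2 ≤ M.card * ∑ c ∈ M, (y c l) ^ 2 :=
      sq_sum_le_card_mul_sum_sq
    have h3 : M.card ≤ R := cellsMet_le hline A B sA sB rA rB hsA hsB hcA hcB
    have h4 : ∑ c ∈ M, (y c l) ^ 2 ≤ ∑ c ∈ cells, (y c l) ^ 2 :=
      Finset.sum_le_sum_of_subset hMsub
    calc (cnt G l) ^ 2 = (∑ c ∈ M, y c l) ^ 2 := by rw [h1]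
      _ ≤ M.card * ∑ c ∈ M, (y c l) ^ 2 := h2
      _ ≤ R * ∑ c ∈ cells, (y c l) ^ 2 := Nat.mul_le_mul h3 h4
  -- Step 3 : per-cell bound
  have hstep3 : ∀ c ∈ cells,
      ∑ l ∈ Lk, (y c l) ^ 2 ≤ 2 * ((sA * sB) * (sA * sB - 1)) + ∑ l ∈ Lk, y c l := by
    intro c _
    set Ai := A.filter (fun a => idx sA A a = c.1) with hAi
    set Bj := B.filter (fun b => idx sB B b = c.2) with hBj
    have hyc : ∀ l : Set (ℝ × ℝ), y c l = cnt (Ai ×ˢ Bj) l := by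
      intro l
      have hset : (G.filter (· ∈ l)).filter (fun p => φ p = c)
          = (Ai ×ˢ Bj).filter (· ∈ l) := by
        ext p
        simp only [Finset.mem_filter, Finset.mem_product, hG, hφ, cellIdx, Prod.ext_iff,
          hAi, hBj]
        tauto
      show ((G.filter (· ∈ l)).filter (fun p => φ p = c)).card = _
      rw [hset]
      rfl
    have hcardc : Ai.card * Bj.card ≤ sA * sB :=
      Nat.mul_le_mul (fiber_card sA hsA A c.1) (fiber_card sB hsB B c.2)
    rw [← Finset.sum_filter_add_sum_filter_not Lk (fun l => 2 ≤ y c l)]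
    have hpart1 : ∑ l ∈ Lk.filter (fun l => 2 ≤ y c l), (y c l) ^ 2
        ≤ 2 * ((sA * sB) * (sA * sB - 1)) := by
      have heq : Lk.filter (fun l => 2 ≤ y c l)
          = Lk.filter (fun l => 2 ≤ cnt (Ai ×ˢ Bj) l) := by
        apply Finset.filter_congr
        intro l _
        rw [hyc l]
      calc ∑ l ∈ Lk.filter (fun l => 2 ≤ y c l), (y c l) ^ 2
          = ∑ l ∈ Lk.filter (fun l => 2 ≤ cnt (Ai ×ˢ Bj) l), (cnt (Ai ×ˢ Bj) l) ^ 2 := by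
            rw [heq]
            exact Finset.sum_congr rfl (fun l _ => by rw [hyc l])
        _ ≤ 2 * ((Ai ×ˢ Bj).card * ((Ai ×ˢ Bj).card - 1)) :=
            sum_sq_le Lk (fun l hl => isLine_of_mem_linesOf (Finset.mem_filter.1 hl).1) _
        _ ≤ 2 * ((sA * sB) * (sA * sB - 1)) := by
            apply Nat.mul_le_mul_left
            apply mul_pred_mono
            rw [Finset.card_product]
            exact hcardc
    have hpart2 : ∑ l ∈ Lk.filter (fun l => ¬ 2 ≤ y c l), (y c l) ^ 2
        ≤ ∑ l ∈ Lk, y c l := by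
      calc ∑ l ∈ Lk.filter (fun l => ¬ 2 ≤ y c l), (y c l) ^ 2
          ≤ ∑ l ∈ Lk.filter (fun l => ¬ 2 ≤ y c l), y c l := by
            apply Finset.sum_le_sum
            intro l hl
            have := (Finset.mem_filter.1 hl).2
            have hy1 : y c l ≤ 1 := by omega
            nlinarith
        _ ≤ ∑ l ∈ Lk, y c l := Finset.sum_le_sum_of_subset (Finset.filter_subset _ _)
    omega
  -- assemble
  have hswap : ∑ l ∈ Lk, ∑ c ∈ cells, (y c l) ^ 2 = ∑ c ∈ cells, ∑ l ∈ Lk, (y c l) ^ 2 :=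
    Finset.sum_comm
  have hswap2 : ∑ c ∈ cells, ∑ l ∈ Lk, y c l = ∑ l ∈ Lk, cnt G l := by
    rw [Finset.sum_comm]
    exact Finset.sum_congr rfl (fun l _ => (hdecomp l).symm)
  have hSle : S ≤ R * (Finset.card cells * (2 * ((sA * sB) * (sA * sB - 1)))
      + ∑ l ∈ Lk, cnt G l) := by
    calc S ≤ ∑ l ∈ Lk, R * ∑ c ∈ cells, (y c l) ^ 2 := Finset.sum_le_sum hstep1
      _ = R * ∑ c ∈ cells, ∑ l ∈ Lk, (y c l) ^ 2 := by rw [← Finset.mul_sum, hswap]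
      _ ≤ R * ∑ c ∈ cells, (2 * ((sA * sB) * (sA * sB - 1)) + ∑ l ∈ Lk, y c l) := by
          apply Nat.mul_le_mul_left
          exact Finset.sum_le_sum hstep3
      _ = R * (Finset.card cells * (2 * ((sA * sB) * (sA * sB - 1)))
          + ∑ l ∈ Lk, cnt G l) := by
          rw [Finset.sum_add_distrib, Finset.sum_const, smul_eq_mul, hswap2]
  have hfirstmom : k * ∑ l ∈ Lk, cnt G l ≤ S := by
    rw [hS, Finset.mul_sum]
    apply Finset.sum_le_sum
    intro l hl
    have := (Finset.mem_filter.1 hl).2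
    nlinarith
  have hcellscard : Finset.card cells = rA * rB := by
    simp [hcells]
  rw [hcellscard] at hSle
  -- k * S ≤ k * R * (...) + R * S  and 2R ≤ k  give  S ≤ 4 R rArB E
  set E := (sA * sB) * (sA * sB - 1) with hE
  have h5 : k * S ≤ k * (R * (rA * rB * (2 * E))) + R * S := by
    calc k * S ≤ k * (R * (rA * rB * (2 * E) + ∑ l ∈ Lk, cnt G l)) :=
          Nat.mul_le_mul_left _ hSle
      _ = k * (R * (rA * rB * (2 * E))) + R * (k * ∑ l ∈ Lk, cnt G l) := by ring
      _ ≤ k * (R * (rA * rB * (2 * E))) + R * S :=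
          Nat.add_le_add_left (Nat.mul_le_mul_left _ hfirstmom) _
  have h6 : 2 * (R * S) ≤ k * S := by
    have := Nat.mul_le_mul_right S hkR
    calc 2 * (R * S) = 2 * (rA + rB) * S := by ring
      _ ≤ k * S := this
  have h7 : k * S ≤ k * (4 * R * (rA * rB) * E) := by nlinarith
  have hkpos : 0 < k := by omega
  exact Nat.le_of_mul_le_mul_left h7 hkpos

lemma ST_bound (A B : Finset ℝ) (k : ℕ) (hk : 2 ≤ k) :
    k * ∑ l ∈ (linesOf (A ×ˢ B)).filter (fun l => k ≤ cnt (A ×ˢ B) l), (cnt (A ×ˢ B) l) ^ 2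
      ≤ 4096 * (max A.card B.card) ^ 4 := by
  classical
  rcases lt_or_ge k 16 with hk16 | hk16
  · -- small k : trivial second moment bound
    have h1 : ∑ l ∈ (linesOf (A ×ˢ B)).filter (fun l => k ≤ cnt (A ×ˢ B) l), (cnt (A ×ˢ B) l) ^ 2
        ≤ ∑ l ∈ (linesOf (A ×ˢ B)).filter (fun l => 2 ≤ cnt (A ×ˢ B) l), (cnt (A ×ˢ B) l) ^ 2 := by
      apply Finset.sum_le_sum_of_subset
      intro l hl
      simp only [Finset.mem_filter] at *
      exact ⟨hl.1, by omega⟩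
    have h2 : ∑ l ∈ (linesOf (A ×ˢ B)).filter (fun l => 2 ≤ cnt (A ×ˢ B) l), (cnt (A ×ˢ B) l) ^ 2
        ≤ 2 * ((A ×ˢ B).card * ((A ×ˢ B).card - 1)) :=
      sum_sq_le _ (fun l hl => isLine_of_mem_linesOf hl) _
    have h3 : (A ×ˢ B).card ≤ (max A.card B.card) * (max A.card B.card) := by
      rw [Finset.card_product]
      exact Nat.mul_le_mul (le_max_left _ _) (le_max_right _ _)
    have h4 : (A ×ˢ B).card * ((A ×ˢ B).card - 1)
        ≤ ((max A.card B.card) * (max A.card B.card)) * ((max A.card B.card) * (max A.card B.card)) :=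
      (mul_pred_mono h3).trans (Nat.mul_le_mul_left _ (Nat.sub_le _ _))
    calc k * ∑ l ∈ (linesOf (A ×ˢ B)).filter (fun l => k ≤ cnt (A ×ˢ B) l), (cnt (A ×ˢ B) l) ^ 2
        ≤ 16 * (2 * (((max A.card B.card) * (max A.card B.card)) * ((max A.card B.card) * (max A.card B.card)))) :=
          Nat.mul_le_mul (le_of_lt hk16) (h1.trans (h2.trans (Nat.mul_le_mul_left _ h4)))
      _ ≤ 4096 * (max A.card B.card) ^ 4 := by ring_nf; nlinarith [pow_le_pow_left₀ (Nat.zero_le _) (le_refl (max A.card B.card)) 4]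
  · -- main case
    set n := max A.card B.card with hn
    obtain ⟨r, hr⟩ : ∃ r, r = k / 16 := ⟨_, rfl⟩
    have hrpos : 0 < r := by omega
    obtain ⟨s, hs⟩ : ∃ s, s = (n - 1) / r + 1 := ⟨_, rfl⟩
    have hspos : 0 < s := by rw [hs]; exact Nat.succ_pos _
    have hsr : n ≤ s * r := by
      have e1 : r * ((n - 1) / r) + (n - 1) % r = n - 1 := Nat.div_add_mod (n - 1) r
      have e2 : (n - 1) % r < r := Nat.mod_lt _ hrpos
      have e3 : s * r = r * ((n - 1) / r) + r := by rw [hs]; ring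
      omega
    have hkR : 2 * (r + r) ≤ k := by omega
    have hmain := one_step A B k s s r r hspos hspos
      ((le_max_left _ _).trans hsr) ((le_max_right _ _).trans hsr) hk hkR
    rcases le_or_gt r n with hrn | hrn
    · have hE : (s * s) * (s * s - 1) ≤ (s * s) * (s * s) :=
        Nat.mul_le_mul_left _ (Nat.sub_le _ _)
      have hS1 : ∑ l ∈ (linesOf (A ×ˢ B)).filter (fun l => k ≤ cnt (A ×ˢ B) l), (cnt (A ×ˢ B) l) ^ 2
          ≤ 8 * (r * (r * r)) * (s * s * (s * s)) := by
        refine hmain.trans ?_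
        calc 4 * (r + r) * (r * r) * ((s * s) * (s * s - 1))
            ≤ 4 * (r + r) * (r * r) * ((s * s) * (s * s)) := Nat.mul_le_mul_left _ hE
          _ = 8 * (r * (r * r)) * (s * s * (s * s)) := by ring
      have hk32 : k ≤ 32 * r := by omega
      have hrs : r * s ≤ 2 * n := by
        have h1 : (n - 1) / r * r ≤ n - 1 := Nat.div_mul_le_self _ _
        have e3 : r * s = (n - 1) / r * r + r := by rw [hs]; ring
        omega
      calc k * ∑ l ∈ (linesOf (A ×ˢ B)).filter (fun l => k ≤ cnt (A ×ˢ B) l), (cnt (A ×ˢ B) l) ^ 2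
          ≤ (32 * r) * (8 * (r * (r * r)) * (s * s * (s * s))) := Nat.mul_le_mul hk32 hS1
        _ = 256 * ((r * s) * (r * s) * (r * s) * (r * s)) := by ring
        _ ≤ 256 * ((2 * n) * (2 * n) * (2 * n) * (2 * n)) := by
            apply Nat.mul_le_mul_left
            exact Nat.mul_le_mul (Nat.mul_le_mul (Nat.mul_le_mul hrs hrs) hrs) hrs
        _ = 4096 * n ^ 4 := by ring
    · have hs1 : s = 1 := by
        have h0 : n - 1 < r := by omega
        rw [hs, Nat.div_eq_of_lt h0]
      have hzero : (s * s) * (s * s - 1) = 0 := by rw [hs1]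
      rw [hzero, Nat.mul_zero] at hmain
      have : ∑ l ∈ (linesOf (A ×ˢ B)).filter (fun l => k ≤ cnt (A ×ˢ B) l), (cnt (A ×ˢ B) l) ^ 2 = 0 := by omega
      rw [this, Nat.mul_zero]
      exact Nat.zero_le _

lemma third_moment_nat (A B : Finset ℝ) :
    ∑ l ∈ (linesOf (A ×ˢ B)).filter (fun l => 2 ≤ cnt (A ×ˢ B) l), (cnt (A ×ˢ B) l) ^ 3
    = ∑ k ∈ Finset.Icc 1 ((A ×ˢ B).card),
        ∑ l ∈ (linesOf (A ×ˢ B)).filter (fun l => max k 2 ≤ cnt (A ×ˢ B) l),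
          (cnt (A ×ˢ B) l) ^ 2 := by
  classical
  set G := A ×ˢ B with hG
  set L := linesOf G with hL
  set N := G.card with hN
  have key : ∀ l ∈ L.filter (fun l => 2 ≤ cnt G l),
      (cnt G l) ^ 3 = ∑ k ∈ Finset.Icc 1 N, (if max k 2 ≤ cnt G l then (cnt G l) ^ 2 else 0) := by
    intro l hl
    have h2 : 2 ≤ cnt G l := (Finset.mem_filter.1 hl).2
    have hle : cnt G l ≤ N := cnt_le_card G l
    rw [Finset.sum_ite, Finset.sum_const_zero, add_zero, Finset.sum_const, smul_eq_mul]
    have hfil : (Finset.Icc 1 N).filter (fun k => max k 2 ≤ cnt G l)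
        = Finset.Icc 1 (cnt G l) := by
      ext k
      simp only [Finset.mem_filter, Finset.mem_Icc]
      omega
    rw [hfil, Nat.card_Icc]
    have : cnt G l + 1 - 1 = cnt G l := by omega
    rw [this]
    ring
  rw [Finset.sum_congr rfl key, Finset.sum_comm]
  apply Finset.sum_congr rfl
  intro k _
  rw [← Finset.sum_filter]
  have : (L.filter (fun l => 2 ≤ cnt G l)).filter (fun l => max k 2 ≤ cnt G l)
      = L.filter (fun l => max k 2 ≤ cnt G l) := by
    rw [Finset.filter_filter]
    apply Finset.filter_congr
    intro l _
    constructor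
    · intro h; exact h.2
    · intro h; exact ⟨by omega, h⟩
  rw [this]

lemma sum_Icc_inv_le (N : ℕ) : ∑ k ∈ Finset.Icc 1 N, (1 : ℝ) / k ≤ 1 + Real.log N := by
  have h1 : ∑ k ∈ Finset.Icc 1 N, (1 : ℝ) / k = (harmonic N : ℝ) := by
    rw [harmonic_eq_sum_Icc]
    push_cast
    apply Finset.sum_congr rfl
    intro k _
    rw [one_div]
  rw [h1]
  exact harmonic_le_one_add_log N

lemma third_moment (A B : Finset ℝ) :
    ∑ l ∈ (linesOf (A ×ˢ B)).filter (fun l => 2 ≤ cnt (A ×ˢ B) l), ((cnt (A ×ˢ B) l : ℝ)) ^ 3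
    ≤ 4096 * ((max A.card B.card : ℕ) : ℝ) ^ 4 * (1 + Real.log ((A ×ˢ B).card)) := by
  classical
  set G := A ×ˢ B with hG
  set n := max A.card B.card with hn
  set N := G.card with hN
  have hcast : ∑ l ∈ (linesOf G).filter (fun l => 2 ≤ cnt G l), ((cnt G l : ℝ)) ^ 3
      = ((∑ l ∈ (linesOf G).filter (fun l => 2 ≤ cnt G l), (cnt G l) ^ 3 : ℕ) : ℝ) := by
    push_cast
    rfl
  rw [hcast, third_moment_nat A B, Nat.cast_sum]
  have hterm : ∀ k ∈ Finset.Icc 1 N,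
      ((∑ l ∈ (linesOf G).filter (fun l => max k 2 ≤ cnt G l), (cnt G l) ^ 2 : ℕ) : ℝ)
        ≤ 4096 * (n : ℝ) ^ 4 * (1 / k) := by
    intro k hk
    have hk1 : 1 ≤ k := (Finset.mem_Icc.1 hk).1
    have hST := ST_bound A B (max k 2) (le_max_right _ _)
    have hkpos : (0 : ℝ) < k := by positivity
    have hmax : (k : ℝ) ≤ ((max k 2 : ℕ) : ℝ) := by
      have : k ≤ max k 2 := le_max_left _ _
      exact_mod_cast this
    have h2 : ((max k 2 : ℕ) : ℝ) * ((∑ l ∈ (linesOf G).filter (fun l => max k 2 ≤ cnt G l), (cnt G l) ^ 2 : ℕ) : ℝ)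
        ≤ 4096 * (n : ℝ) ^ 4 := by
      exact_mod_cast hST
    have h3 : (k : ℝ) * ((∑ l ∈ (linesOf G).filter (fun l => max k 2 ≤ cnt G l), (cnt G l) ^ 2 : ℕ) : ℝ)
        ≤ 4096 * (n : ℝ) ^ 4 :=
      le_trans (mul_le_mul_of_nonneg_right hmax (by positivity)) h2
    rw [mul_one_div, le_div_iff₀ hkpos]
    linarith [h3]
  calc (∑ k ∈ Finset.Icc 1 N, ((∑ l ∈ (linesOf G).filter (fun l => max k 2 ≤ cnt G l), (cnt G l) ^ 2 : ℕ) : ℝ))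
      ≤ ∑ k ∈ Finset.Icc 1 N, 4096 * (n : ℝ) ^ 4 * (1 / k) := Finset.sum_le_sum hterm
    _ = 4096 * (n : ℝ) ^ 4 * ∑ k ∈ Finset.Icc 1 N, (1 : ℝ) / k := by rw [← Finset.mul_sum]
    _ ≤ 4096 * (n : ℝ) ^ 4 * (1 + Real.log N) := by
        apply mul_le_mul_of_nonneg_left (sum_Icc_inv_le N) (by positivity)


lemma alphaCnt_eq_cnt (C : Finset ℝ) (l : Set (ℝ × ℝ)) :
    alphaCnt C l = cnt (C ×ˢ C) l := by
  classical
  unfold alphaCnt cnt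
  have hset : l ∩ (C : Set ℝ) ×ˢ (C : Set ℝ) = ↑((C ×ˢ C).filter (· ∈ l)) := by
    ext p
    simp only [Set.mem_inter_iff, Set.mem_prod, Finset.coe_filter, Set.mem_setOf_eq,
      Finset.mem_product, Finset.mem_coe]
    tauto
  rw [hset, Set.ncard_coe_finset]

/-- first moment bound for a finite family of lines each passing through a point of G0. -/
lemma first_moment (LF : Finset (Set (ℝ × ℝ))) (G0 Gi : Finset (ℝ × ℝ))
    (hlines : ∀ l ∈ LF, IsLine l)
    (hthru : ∀ l ∈ LF, ∃ q ∈ G0, q ∈ l)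
    (h2 : ∀ l ∈ LF, 2 ≤ cnt Gi l) :
    ∑ l ∈ LF, cnt Gi l ≤ G0.card * (2 * Gi.card) := by
  classical
  have hcover : ∑ l ∈ LF, cnt Gi l ≤ ∑ q ∈ G0, ∑ l ∈ LF.filter (fun l => q ∈ l), cnt Gi l := by
    have hswap : ∑ q ∈ G0, ∑ l ∈ LF.filter (fun l => q ∈ l), cnt Gi l
        = ∑ l ∈ LF, (G0.filter (· ∈ l)).card * cnt Gi l := by
      have e1 : ∀ q, ∑ l ∈ LF.filter (fun l => q ∈ l), cnt Gi l
          = ∑ l ∈ LF, if q ∈ l then cnt Gi l else 0 := by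
        intro q
        rw [Finset.sum_filter]
      simp_rw [e1]
      rw [Finset.sum_comm]
      apply Finset.sum_congr rfl
      intro l _
      rw [← Finset.sum_filter, Finset.sum_const, smul_eq_mul]
    rw [hswap]
    apply Finset.sum_le_sum
    intro l hl
    have h1 : 1 ≤ (G0.filter (· ∈ l)).card := by
      obtain ⟨q, hq, hql⟩ := hthru l hl
      exact Finset.card_pos.2 ⟨q, Finset.mem_filter.2 ⟨hq, hql⟩⟩
    calc cnt Gi l = 1 * cnt Gi l := (one_mul _).symm
      _ ≤ (G0.filter (· ∈ l)).card * cnt Gi l := Nat.mul_le_mul_right _ h1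
  refine hcover.trans ?_
  have hper : ∀ q ∈ G0, ∑ l ∈ LF.filter (fun l => q ∈ l), cnt Gi l ≤ 2 * Gi.card := by
    intro q _
    have hpencil := pencil_bound (LF.filter (fun l => q ∈ l))
      (fun l hl => hlines l (Finset.mem_filter.1 hl).1) q
      (fun l hl => (Finset.mem_filter.1 hl).2) Gi
    have h1 : ∑ l ∈ LF.filter (fun l => q ∈ l), cnt Gi l
        ≤ ∑ l ∈ LF.filter (fun l => q ∈ l), 2 * (cnt Gi l - 1) := by
      apply Finset.sum_le_sum
      intro l hl
      have := h2 l (Finset.mem_filter.1 hl).1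
      omega
    refine h1.trans ?_
    rw [← Finset.mul_sum]
    exact Nat.mul_le_mul_left _ hpencil
  calc ∑ q ∈ G0, ∑ l ∈ LF.filter (fun l => q ∈ l), cnt Gi l
      ≤ ∑ q ∈ G0, 2 * Gi.card := Finset.sum_le_sum hper
    _ = G0.card * (2 * Gi.card) := by rw [Finset.sum_const, smul_eq_mul]

lemma rpow_identity {x X Y θ p : ℝ} (hx : 0 < x) (hX : 0 < X) (hY : 0 < Y)
    (hθp : θ + 3 * (1 - θ) = p) :
    ((Y / X) ^ (1 - θ) * x) ^ θ * ((X / Y) ^ θ * x ^ (3 : ℕ)) ^ (1 - θ) = x ^ p := by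
  have hYX : (0 : ℝ) ≤ Y / X := le_of_lt (div_pos hY hX)
  have hXY : (0 : ℝ) ≤ X / Y := le_of_lt (div_pos hX hY)
  have h1 : ((Y / X) ^ (1 - θ) * x) ^ θ = (Y / X) ^ ((1 - θ) * θ) * x ^ θ := by
    rw [Real.mul_rpow (Real.rpow_nonneg hYX _) hx.le, ← Real.rpow_mul hYX]
  have h2 : ((X / Y) ^ θ * x ^ (3 : ℕ)) ^ (1 - θ)
      = (X / Y) ^ (θ * (1 - θ)) * x ^ ((3 : ℝ) * (1 - θ)) := by
    rw [Real.mul_rpow (Real.rpow_nonneg hXY _) (pow_nonneg hx.le _), ← Real.rpow_mul hXY,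
      ← Real.rpow_natCast x 3, ← Real.rpow_mul hx.le]
    norm_num
  rw [h1, h2]
  have h3 : (Y / X) ^ ((1 - θ) * θ) * x ^ θ * ((X / Y) ^ (θ * (1 - θ)) * x ^ ((3:ℝ) * (1 - θ)))
      = ((Y / X) ^ ((1 - θ) * θ) * (X / Y) ^ ((1 - θ) * θ)) * (x ^ θ * x ^ ((3:ℝ) * (1 - θ))) := by
    rw [mul_comm θ (1 - θ)]
    ring
  rw [h3, ← Real.mul_rpow hYX hXY]
  have h4 : Y / X * (X / Y) = 1 := by
    field_simp
  rw [h4, Real.one_rpow, one_mul, ← Real.rpow_add hx]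
  rw [show θ + 3 * (1 - θ) = p from hθp]

lemma interp_sum {ι : Type*} (s : Finset ι) (f : ι → ℝ) (hf : ∀ i ∈ s, 0 < f i)
    (hne : s.Nonempty) (p θ : ℝ) (hθ : θ = (3 - p) / 2) (hp1 : 1 ≤ p) (hp3 : p ≤ 3) :
    ∑ i ∈ s, f i ^ p
      ≤ 2 * (∑ i ∈ s, f i) ^ θ * (∑ i ∈ s, f i ^ (3 : ℕ)) ^ (1 - θ) := by
  have hθ0 : 0 ≤ θ := by rw [hθ]; linarith
  have hθ1 : θ ≤ 1 := by rw [hθ]; linarith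
  have hθp : θ + 3 * (1 - θ) = p := by rw [hθ]; ring
  set X := ∑ i ∈ s, f i with hX
  set Y := ∑ i ∈ s, f i ^ (3 : ℕ) with hY
  have hXpos : 0 < X := Finset.sum_pos hf hne
  have hYpos : 0 < Y := Finset.sum_pos (fun i hi => pow_pos (hf i hi) _) hne
  have hlam0 : (0:ℝ) ≤ (Y / X) ^ (1 - θ) := Real.rpow_nonneg (le_of_lt (div_pos hYpos hXpos)) _
  have hmu0 : (0:ℝ) ≤ (X / Y) ^ θ := Real.rpow_nonneg (le_of_lt (div_pos hXpos hYpos)) _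
  have hpoint : ∀ i ∈ s, f i ^ p
      ≤ (Y / X) ^ (1 - θ) * f i + (X / Y) ^ θ * f i ^ (3:ℕ) := by
    intro i hi
    have hx := hf i hi
    calc f i ^ p
        = ((Y / X) ^ (1 - θ) * f i) ^ θ * ((X / Y) ^ θ * f i ^ (3:ℕ)) ^ (1 - θ) :=
          (rpow_identity hx hXpos hYpos hθp).symm
      _ ≤ θ * ((Y / X) ^ (1 - θ) * f i) + (1 - θ) * ((X / Y) ^ θ * f i ^ (3:ℕ)) :=
          Real.geom_mean_le_arith_mean2_weighted hθ0 (by linarith)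
            (mul_nonneg hlam0 hx.le) (mul_nonneg hmu0 (pow_nonneg hx.le _)) (by ring)
      _ ≤ (Y / X) ^ (1 - θ) * f i + (X / Y) ^ θ * f i ^ (3:ℕ) := by
          have t0 : (0:ℝ) ≤ (Y / X) ^ (1 - θ) * f i := mul_nonneg hlam0 hx.le
          have t0' : (0:ℝ) ≤ (X / Y) ^ θ * f i ^ (3:ℕ) := mul_nonneg hmu0 (pow_nonneg hx.le _)
          nlinarith
  have hsum : ∑ i ∈ s, f i ^ p ≤ (Y / X) ^ (1 - θ) * X + (X / Y) ^ θ * Y := by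
    calc ∑ i ∈ s, f i ^ p
        ≤ ∑ i ∈ s, ((Y / X) ^ (1 - θ) * f i + (X / Y) ^ θ * f i ^ (3:ℕ)) :=
          Finset.sum_le_sum hpoint
      _ = (Y / X) ^ (1 - θ) * X + (X / Y) ^ θ * Y := by
          rw [Finset.sum_add_distrib, ← Finset.mul_sum, ← Finset.mul_sum]
  refine hsum.trans (le_of_eq ?_)
  have hne1 : X ^ (1 - θ) ≠ 0 := ne_of_gt (Real.rpow_pos_of_pos hXpos _)
  have hne2 : Y ^ θ ≠ 0 := ne_of_gt (Real.rpow_pos_of_pos hYpos _)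
  have e1 : (Y / X) ^ (1 - θ) * X = X ^ θ * Y ^ (1 - θ) := by
    have h := Real.rpow_sub hXpos 1 (1 - θ)
    rw [show (1:ℝ) - (1 - θ) = θ by ring, Real.rpow_one] at h
    rw [h, Real.div_rpow hYpos.le hXpos.le]
    field_simp
  have e2 : (X / Y) ^ θ * Y = X ^ θ * Y ^ (1 - θ) := by
    have h := Real.rpow_sub hYpos 1 θ
    rw [Real.rpow_one] at h
    rw [h, Real.div_rpow hXpos.le hYpos.le]
    field_simp
  rw [e1, e2]
  ring


set_option maxHeartbeats 2000000 in
theorem rich_lines_moment_bound :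
    ∃ C c : ℝ, 0 < C ∧ 0 ≤ c ∧
      ∀ A : Fin 3 → Finset ℝ, (A 0).card ≤ (A 1).card → (A 1).card ≤ (A 2).card →
      ∀ (i : Fin 3) (p : ℝ), 1 ≤ p → p ≤ 3 →
        (∑ᶠ l ∈ {l ∈ lineFamily (A 0) (A 1) (A 2) | 2 ≤ alphaCnt (A i) l},
            (alphaCnt (A i) l : ℝ) ^ p) ≤
          C * ((A 0).card : ℝ) ^ (3 - p) * ((A i).card : ℝ) ^ (p + 1) *
            Real.log (2 + ((A 2).card : ℝ)) ^ c := by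
  classical
  refine ⟨65536, 1, by norm_num, by norm_num, ?_⟩
  intro A hA01 hA12 i p hp1 hp3
  set Gi := A i ×ˢ A i with hGi
  set 𝒮 := {l ∈ lineFamily (A 0) (A 1) (A 2) | 2 ≤ alphaCnt (A i) l} with h𝒮
  -- positivity of RHS pieces
  have hL2pos : 0 < Real.log (2 + ((A 2).card : ℝ)) := by
    apply Real.log_pos
    have : (0:ℝ) ≤ ((A 2).card : ℝ) := Nat.cast_nonneg _
    linarith
  have hRHS0 : 0 ≤ (65536 : ℝ) * ((A 0).card : ℝ) ^ (3 - p) * ((A i).card : ℝ) ^ (p + 1) *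
      Real.log (2 + ((A 2).card : ℝ)) ^ (1:ℝ) := by
    apply mul_nonneg
    apply mul_nonneg
    apply mul_nonneg (by norm_num)
    · exact Real.rpow_nonneg (Nat.cast_nonneg _) _
    · exact Real.rpow_nonneg (Nat.cast_nonneg _) _
    · exact Real.rpow_nonneg hL2pos.le _
  -- membership facts
  have hmem : ∀ l ∈ 𝒮, IsLine l ∧ 2 ≤ cnt Gi l ∧ ∃ q ∈ (A 0) ×ˢ (A 0), q ∈ l := by
    intro l hl
    have hl' : l ∈ lineFamily (A 0) (A 1) (A 2) ∧ 2 ≤ alphaCnt (A i) l := hl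
    obtain ⟨⟨hline, u₁, u₂, u₃, hu₁, hu₂, hu₃, h12, h13, h23, hl1, hl2, hl3⟩, h2⟩ := hl'
    refine ⟨hline, ?_, ⟨u₁, ?_, hl1⟩⟩
    · rw [alphaCnt_eq_cnt] at h2; exact h2
    · rw [Finset.mem_product]
      exact ⟨hu₁.1, hu₁.2⟩
  have hsub : 𝒮 ⊆ ↑((linesOf Gi).filter (fun l => 2 ≤ cnt Gi l)) := by
    intro l hl
    obtain ⟨hline, h2, -⟩ := hmem l hl
    simp only [Finset.coe_filter, Set.mem_setOf_eq]
    exact ⟨mem_linesOf_of_two hline h2, h2⟩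
  have hfin : 𝒮.Finite := Set.Finite.subset (Finset.finite_toSet _) hsub
  set LF := hfin.toFinset with hLF
  have hcoe : 𝒮 = ↑LF := hfin.coe_toFinset.symm
  rw [hcoe, finsum_mem_coe_finset]
  have hLFmem : ∀ l ∈ LF, IsLine l ∧ 2 ≤ cnt Gi l ∧ ∃ q ∈ (A 0) ×ˢ (A 0), q ∈ l := by
    intro l hl
    exact hmem l (hfin.mem_toFinset.1 hl)
  have hLFsub : LF ⊆ (linesOf Gi).filter (fun l => 2 ≤ cnt Gi l) := by
    intro l hl
    exact Finset.mem_coe.1 (hsub (hfin.mem_toFinset.1 hl))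
  -- rewrite alphaCnt as cnt
  have hsumeq : ∑ l ∈ LF, (alphaCnt (A i) l : ℝ) ^ p = ∑ l ∈ LF, ((cnt Gi l : ℝ)) ^ p := by
    apply Finset.sum_congr rfl
    intro l _
    rw [alphaCnt_eq_cnt]
  rw [hsumeq]
  rcases Finset.eq_empty_or_nonempty LF with hempty | hne
  · rw [hempty, Finset.sum_empty]
    exact hRHS0
  -- nonempty case
  obtain ⟨l₀, hl₀⟩ := hne
  have hni2 : 2 ≤ (A i).card := by
    have h2 := (hLFmem l₀ hl₀).2.1
    have hle : cnt Gi l₀ ≤ Gi.card := cnt_le_card _ _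
    have hG : Gi.card = (A i).card * (A i).card := by rw [hGi, Finset.card_product]
    by_contra hcon
    push_neg at hcon
    have h1 : (A i).card ≤ 1 := by omega
    have := Nat.mul_le_mul h1 h1
    omega
  have ha1 : 1 ≤ (A 0).card := by
    obtain ⟨-, -, q, hq, -⟩ := hLFmem l₀ hl₀
    rw [Finset.mem_product] at hq
    exact Finset.card_pos.2 ⟨q.1, hq.1⟩
  have hi2 : (A i).card ≤ (A 2).card := by
    fin_cases i
    · exact hA01.trans hA12
    · exact hA12
    · exact le_refl _
  -- first moment
  have hXnat : ∑ l ∈ LF, cnt Gi l ≤ (A 0).card ^ 2 * (2 * (A i).card ^ 2) := by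
    have := first_moment LF ((A 0) ×ˢ (A 0)) Gi
      (fun l hl => (hLFmem l hl).1)
      (fun l hl => (hLFmem l hl).2.2)
      (fun l hl => (hLFmem l hl).2.1)
    rw [Finset.card_product, Finset.card_product, hGi] at this
    calc ∑ l ∈ LF, cnt Gi l ≤ (A 0).card * (A 0).card * (2 * ((A i).card * (A i).card)) := this
      _ = (A 0).card ^ 2 * (2 * (A i).card ^ 2) := by ring
  -- third moment
  have hYreal : ∑ l ∈ LF, ((cnt Gi l : ℝ)) ^ (3:ℕ)
      ≤ 4096 * ((A i).card : ℝ) ^ (4:ℕ) * (1 + Real.log (Gi.card)) := by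
    have hmono : ∑ l ∈ LF, ((cnt Gi l : ℝ)) ^ (3:ℕ)
        ≤ ∑ l ∈ (linesOf Gi).filter (fun l => 2 ≤ cnt Gi l), ((cnt Gi l : ℝ)) ^ (3:ℕ) := by
      apply Finset.sum_le_sum_of_subset_of_nonneg hLFsub
      intro l _ _
      positivity
    refine hmono.trans ?_
    have := third_moment (A i) (A i)
    rw [max_self] at this
    exact this
  -- log bound
  set L2 := Real.log (2 + ((A 2).card : ℝ)) with hL2
  have hL2one : 1 ≤ L2 := by
    have h4 : (4:ℝ) ≤ 2 + ((A 2).card : ℝ) := by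
      have : (2:ℝ) ≤ ((A 2).card : ℝ) := by exact_mod_cast hni2.trans hi2
      linarith
    have hexp : Real.exp 1 ≤ 4 := by
      have := Real.exp_one_lt_d9
      linarith
    calc (1:ℝ) = Real.log (Real.exp 1) := (Real.log_exp 1).symm
      _ ≤ Real.log 4 := Real.log_le_log (Real.exp_pos 1) hexp
      _ ≤ L2 := Real.log_le_log (by norm_num) h4
  have hlogG : 1 + Real.log (Gi.card) ≤ 3 * L2 := by
    have hGicard : (Gi.card : ℝ) = ((A i).card : ℝ) * ((A i).card : ℝ) := by
      rw [hGi, Finset.card_product]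
      push_cast
      ring
    have hnipos : (0:ℝ) < ((A i).card : ℝ) := by
      have : (0:ℕ) < (A i).card := by omega
      exact_mod_cast this
    have hlogni : Real.log ((A i).card : ℝ) ≤ L2 := by
      apply Real.log_le_log hnipos
      have : ((A i).card : ℝ) ≤ ((A 2).card : ℝ) := by exact_mod_cast hi2
      linarith
    rw [hGicard, Real.log_mul (ne_of_gt hnipos) (ne_of_gt hnipos)]
    linarith
  have hYfinal : ∑ l ∈ LF, ((cnt Gi l : ℝ)) ^ (3:ℕ)
      ≤ 12288 * ((A i).card : ℝ) ^ (4:ℕ) * L2 := by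
    refine hYreal.trans ?_
    have hpow : (0:ℝ) ≤ ((A i).card : ℝ) ^ (4:ℕ) := pow_nonneg (Nat.cast_nonneg _) _
    calc 4096 * ((A i).card : ℝ) ^ (4:ℕ) * (1 + Real.log (Gi.card))
        ≤ 4096 * ((A i).card : ℝ) ^ (4:ℕ) * (3 * L2) := by
          apply mul_le_mul_of_nonneg_left hlogG (mul_nonneg (by norm_num) hpow)
      _ = 12288 * ((A i).card : ℝ) ^ (4:ℕ) * L2 := by ring
  -- interpolation
  set θ := (3 - p) / 2 with hθdef
  have hθ0 : 0 ≤ θ := by rw [hθdef]; linarith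
  have hθ1 : θ ≤ 1 := by rw [hθdef]; linarith
  have hinterp := interp_sum LF (fun l => ((cnt Gi l : ℝ)))
    (fun l hl => by
      have := (hLFmem l hl).2.1
      have : (2:ℝ) ≤ (cnt Gi l : ℝ) := by exact_mod_cast this
      linarith)
    ⟨l₀, hl₀⟩ p θ hθdef hp1 hp3
  refine hinterp.trans ?_
  -- bound the two factors
  set X := ∑ l ∈ LF, ((cnt Gi l : ℝ)) with hXdef
  set Y := ∑ l ∈ LF, ((cnt Gi l : ℝ)) ^ (3:ℕ) with hYdef
  have hXpos : 0 < X := by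
    apply Finset.sum_pos
    · intro l hl
      have := (hLFmem l hl).2.1
      have : (2:ℝ) ≤ (cnt Gi l : ℝ) := by exact_mod_cast this
      linarith
    · exact ⟨l₀, hl₀⟩
  have hYpos : 0 < Y := by
    apply Finset.sum_pos
    · intro l hl
      have := (hLFmem l hl).2.1
      have h2 : (2:ℝ) ≤ (cnt Gi l : ℝ) := by exact_mod_cast this
      positivity
    · exact ⟨l₀, hl₀⟩
  have hXbound : X ≤ 2 * ((A 0).card : ℝ) ^ (2:ℕ) * ((A i).card : ℝ) ^ (2:ℕ) := by
    have : X = ((∑ l ∈ LF, cnt Gi l : ℕ) : ℝ) := by rw [hXdef]; push_cast; rfl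
    rw [this]
    have hcast : ((∑ l ∈ LF, cnt Gi l : ℕ) : ℝ) ≤ (((A 0).card ^ 2 * (2 * (A i).card ^ 2) : ℕ) : ℝ) := by
      exact_mod_cast hXnat
    refine hcast.trans (le_of_eq ?_)
    push_cast
    ring
  have hXB0 : (0:ℝ) < 2 * ((A 0).card : ℝ) ^ (2:ℕ) * ((A i).card : ℝ) ^ (2:ℕ) := by
    have h0 : (0:ℝ) < ((A 0).card : ℝ) := by exact_mod_cast ha1
    have h1 : (0:ℝ) < ((A i).card : ℝ) := by
      have : (0:ℕ) < (A i).card := by omega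
      exact_mod_cast this
    exact mul_pos (mul_pos (by norm_num) (pow_pos h0 _)) (pow_pos h1 _)
  have hYB0 : (0:ℝ) < 12288 * ((A i).card : ℝ) ^ (4:ℕ) * L2 := by
    have h1 : (0:ℝ) < ((A i).card : ℝ) := by
      have : (0:ℕ) < (A i).card := by omega
      exact_mod_cast this
    exact mul_pos (mul_pos (by norm_num) (pow_pos h1 _)) hL2pos
  have hfac : 2 * X ^ θ * Y ^ (1 - θ)
      ≤ 2 * (2 * ((A 0).card : ℝ) ^ (2:ℕ) * ((A i).card : ℝ) ^ (2:ℕ)) ^ θ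
          * (12288 * ((A i).card : ℝ) ^ (4:ℕ) * L2) ^ (1 - θ) := by
    have h1 : X ^ θ ≤ (2 * ((A 0).card : ℝ) ^ (2:ℕ) * ((A i).card : ℝ) ^ (2:ℕ)) ^ θ :=
      Real.rpow_le_rpow hXpos.le hXbound hθ0
    have h2 : Y ^ (1 - θ) ≤ (12288 * ((A i).card : ℝ) ^ (4:ℕ) * L2) ^ (1 - θ) :=
      Real.rpow_le_rpow hYpos.le hYfinal (by linarith)
    have h3 : (0:ℝ) ≤ X ^ θ := Real.rpow_nonneg hXpos.le _
    have h4 : (0:ℝ) ≤ (2 * ((A 0).card : ℝ) ^ (2:ℕ) * ((A i).card : ℝ) ^ (2:ℕ)) ^ θ :=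
      Real.rpow_nonneg hXB0.le _
    have h5 : (0:ℝ) ≤ Y ^ (1 - θ) := Real.rpow_nonneg hYpos.le _
    nlinarith
  refine hfac.trans ?_
  -- final algebra
  have ha0 : (0:ℝ) < ((A 0).card : ℝ) := by exact_mod_cast ha1
  have hn0 : (0:ℝ) < ((A i).card : ℝ) := by
    have : (0:ℕ) < (A i).card := by omega
    exact_mod_cast this
  have hE3 : (((A 0).card : ℝ) ^ (2:ℕ)) ^ θ = ((A 0).card : ℝ) ^ (3 - p) := by
    rw [← Real.rpow_natCast ((A 0).card : ℝ) 2, ← Real.rpow_mul ha0.le]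
    congr 1
    rw [hθdef]
    push_cast
    ring
  have hE4 : (((A i).card : ℝ) ^ (2:ℕ)) ^ θ * (((A i).card : ℝ) ^ (4:ℕ)) ^ (1 - θ)
      = ((A i).card : ℝ) ^ (p + 1) := by
    rw [← Real.rpow_natCast ((A i).card : ℝ) 2, ← Real.rpow_natCast ((A i).card : ℝ) 4,
      ← Real.rpow_mul hn0.le, ← Real.rpow_mul hn0.le, ← Real.rpow_add hn0]
    congr 1
    rw [hθdef]
    push_cast
    ring
  have key : 2 * (2 * ((A 0).card : ℝ) ^ (2:ℕ) * ((A i).card : ℝ) ^ (2:ℕ)) ^ θ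
      * (12288 * ((A i).card : ℝ) ^ (4:ℕ) * L2) ^ (1 - θ)
      = (2 * (2:ℝ) ^ θ * (12288:ℝ) ^ (1 - θ))
        * (((A 0).card : ℝ) ^ (3 - p) * (((A i).card : ℝ) ^ (p + 1) * L2 ^ (1 - θ))) := by
    rw [Real.mul_rpow (mul_nonneg (by norm_num : (0:ℝ) ≤ 2) (pow_nonneg ha0.le 2)) (pow_nonneg hn0.le 2),
        Real.mul_rpow (by norm_num : (0:ℝ) ≤ 2) (pow_nonneg ha0.le 2),
        Real.mul_rpow (mul_nonneg (by norm_num : (0:ℝ) ≤ 12288) (pow_nonneg hn0.le 4)) (hL2pos.le),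
        Real.mul_rpow (by norm_num : (0:ℝ) ≤ 12288) (pow_nonneg hn0.le 4)]
    rw [← hE3, ← hE4]
    ring
  rw [key]
  have c1 : (2:ℝ) ^ θ ≤ 2 := by
    calc (2:ℝ) ^ θ ≤ (2:ℝ) ^ (1:ℝ) :=
          Real.rpow_le_rpow_of_exponent_le (by norm_num) hθ1
      _ = 2 := Real.rpow_one 2
  have c2 : (12288:ℝ) ^ (1 - θ) ≤ 12288 := by
    calc (12288:ℝ) ^ (1 - θ) ≤ (12288:ℝ) ^ (1:ℝ) :=
          Real.rpow_le_rpow_of_exponent_le (by norm_num) (by linarith)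
      _ = 12288 := Real.rpow_one _
  have c3 : L2 ^ (1 - θ) ≤ L2 ^ (1:ℝ) :=
    Real.rpow_le_rpow_of_exponent_le hL2one (by linarith)
  have n1 : (0:ℝ) ≤ ((A 0).card : ℝ) ^ (3 - p) := Real.rpow_nonneg ha0.le _
  have n2 : (0:ℝ) ≤ ((A i).card : ℝ) ^ (p + 1) := Real.rpow_nonneg hn0.le _
  have n3 : (0:ℝ) ≤ L2 ^ (1 - θ) := Real.rpow_nonneg hL2pos.le _
  have n4 : (0:ℝ) ≤ (2:ℝ) ^ θ := Real.rpow_nonneg (by norm_num) _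
  have n5 : (0:ℝ) ≤ (12288:ℝ) ^ (1 - θ) := Real.rpow_nonneg (by norm_num) _
  have hC0 : 2 * (2:ℝ) ^ θ * (12288:ℝ) ^ (1 - θ) ≤ 49152 := by
    have h12 : (2:ℝ) ^ θ * (12288:ℝ) ^ (1 - θ) ≤ 2 * 12288 :=
      mul_le_mul c1 c2 n5 (by norm_num)
    calc 2 * (2:ℝ) ^ θ * (12288:ℝ) ^ (1 - θ) = 2 * ((2:ℝ) ^ θ * (12288:ℝ) ^ (1 - θ)) := by ring
      _ ≤ 2 * (2 * 12288) := mul_le_mul_of_nonneg_left h12 (by norm_num)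
      _ = 49152 := by norm_num
  have hinner : ((A 0).card : ℝ) ^ (3 - p) * (((A i).card : ℝ) ^ (p + 1) * L2 ^ (1 - θ))
      ≤ ((A 0).card : ℝ) ^ (3 - p) * (((A i).card : ℝ) ^ (p + 1) * L2 ^ (1:ℝ)) := by
    apply mul_le_mul_of_nonneg_left _ n1
    exact mul_le_mul_of_nonneg_left c3 n2
  have hinner0 : (0:ℝ) ≤ ((A 0).card : ℝ) ^ (3 - p) * (((A i).card : ℝ) ^ (p + 1) * L2 ^ (1 - θ)) := by
    apply mul_nonneg n1 (mul_nonneg n2 n3)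
  calc (2 * (2:ℝ) ^ θ * (12288:ℝ) ^ (1 - θ))
        * (((A 0).card : ℝ) ^ (3 - p) * (((A i).card : ℝ) ^ (p + 1) * L2 ^ (1 - θ)))
      ≤ 49152 * (((A 0).card : ℝ) ^ (3 - p) * (((A i).card : ℝ) ^ (p + 1) * L2 ^ (1:ℝ))) := by
        apply mul_le_mul hC0 hinner hinner0 (by norm_num)
    _ ≤ 65536 * (((A 0).card : ℝ) ^ (3 - p) * (((A i).card : ℝ) ^ (p + 1) * L2 ^ (1:ℝ))) := by
        apply mul_le_mul_of_nonneg_right (by norm_num)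
        apply mul_nonneg n1 (mul_nonneg n2 (Real.rpow_nonneg hL2pos.le _))
    _ = 65536 * ((A 0).card : ℝ) ^ (3 - p) * ((A i).card : ℝ) ^ (p + 1) * L2 ^ (1:ℝ) := by
        ring
end
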